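/- arXiv:2308.09408 — 7 statements merged into one kernel-verified Lean document; each statement's English description precedes it below -/
import Mathlib

section
/- Let X, Y be bounded nonnegative contractions on a Hilbert space K with X + Y = I. Then ran X ∩ ran Y = ran(XY). -/
/-- ran X ∩ ran Y = ran (XY) for nonnegative contractions X, Y with X + Y = I. -/
theorem stmt_1 {K : Type*} [NormedAddCommGroup K] [InnerProductSpace ℝ K] [CompleteSpace K]
    (X Y : K →L[ℝ] K)
    (hXsa : IsSelfAdjoint X) (hYsa : IsSelfAdjoint Y)
    (hX0 : ∀ x, 0 ≤ (inner ℝ (X x) x : ℝ)) (hX1 : ∀ x, (inner ℝ (X x) x : ℝ) ≤ ‖x‖ ^ 2)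
    (hY0 : ∀ x, 0 ≤ (inner ℝ (Y x) x : ℝ)) (hY1 : ∀ x, (inner ℝ (Y x) x : ℝ) ≤ ‖x‖ ^ 2)
    (hXY : X + Y = 1) :
    LinearMap.range (X : K →ₗ[ℝ] K) ⊓ LinearMap.range (Y : K →ₗ[ℝ] K) = LinearMap.range ((X.comp Y : K →L[ℝ] K) : K →ₗ[ℝ] K) := by
  have hY' : Y = 1 - X := eq_sub_of_add_eq' hXY
  have hcomm : ∀ v, X (Y v) = Y (X v) := by
    intro v
    simp [hY', ContinuousLinearMap.sub_apply, map_sub]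
  ext u
  simp only [Submodule.mem_inf, LinearMap.mem_range, ContinuousLinearMap.coe_comp',
    Function.comp_apply, ContinuousLinearMap.coe_coe]
  constructor
  · rintro ⟨⟨a, ha⟩, ⟨b, hb⟩⟩
    refine ⟨a + b, ?_⟩
    have h1 : X (Y a) = u - X u := by
      simp [hY', ContinuousLinearMap.sub_apply, map_sub, ha]
    have h2 : X (Y b) = X u := by rw [hb]
    rw [map_add, map_add, h1, h2]
    abel
  · rintro ⟨c, rfl⟩
    exact ⟨⟨Y c, rfl⟩, ⟨X c, (hcomm c).symm⟩⟩
end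

section
/- Let X, Y be bounded nonnegative contractions on a Hilbert space K with X + Y = I. Then ran X^{1/2} ∩ ran Y^{1/2} = ran(X^{1/2} Y^{1/2}). -/
set_option maxHeartbeats 1000000
set_option synthInstance.maxHeartbeats 400000

open Finset

/-- Coefficients of the power series `1 - sqrt(1-t) = ∑ cb n * t^n`. -/
noncomputable def cb : ℕ → ℝ
  | 0 => 0
  | (m+1) => catalan m / 2^(2*m+1)

lemma cb_zero : cb 0 = 0 := rfl

lemma cb_nonneg (n : ℕ) : 0 ≤ cb n := by
  cases n with
  | zero => simp [cb]
  | succ m => exact div_nonneg (by positivity) (by positivity)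

lemma cb_anti (n : ℕ) : ∑ p ∈ antidiagonal n, cb p.1 * cb p.2
    = 2 * cb n - (if n = 1 then 1 else 0) := by
  match n with
  | 0 => simp [cb]
  | 1 => simp [cb, Finset.Nat.sum_antidiagonal_succ]
  | (m+2) =>
    rw [Finset.Nat.sum_antidiagonal_succ]
    have h2 : ∑ p ∈ antidiagonal (m+1), cb (p.1 + 1) * cb p.2
        = ∑ p ∈ antidiagonal m, cb (p.1+1) * cb (p.2+1) := by
      rw [Finset.Nat.sum_antidiagonal_succ']
      simp [cb]
    have h3 : ∑ p ∈ antidiagonal m, cb (p.1+1) * cb (p.2+1)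
        = (∑ p ∈ antidiagonal m, (catalan p.1 * catalan p.2 : ℝ)) / 2^(2*m+2) := by
      rw [Finset.sum_div]
      refine Finset.sum_congr rfl fun p hp => ?_
      have hpm : p.1 + p.2 = m := Finset.HasAntidiagonal.mem_antidiagonal.mp hp
      simp only [cb]
      rw [div_mul_div_comm, ← pow_add]
      congr 2
      omega
    have h4 : (∑ p ∈ antidiagonal m, (catalan p.1 * catalan p.2 : ℝ)) = catalan (m+1) := by
      rw [catalan_succ']
      push_cast
      ring
    rw [h2, h3, h4, if_neg (by omega), sub_zero]
    have hcb0 : cb 0 = 0 := rfl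
    have hcb2 : cb (m+2) = catalan (m+1) / 2^(2*(m+1)+1) := rfl
    rw [hcb0, hcb2, zero_mul, zero_add]
    rw [show 2*(m+1)+1 = (2*m+2)+1 by ring, pow_succ]
    field_simp
    ring

lemma cb_partial (N : ℕ) : ∑ n ∈ range N, cb n ≤ 1 := by
  induction N with
  | zero => simp
  | succ N ih =>
    have key : ∀ n, cb n = (1/2) * ((if n = 1 then (1:ℝ) else 0)
        + ∑ p ∈ antidiagonal n, cb p.1 * cb p.2) := by
      intro n; rw [cb_anti]; ring
    calc ∑ n ∈ range (N+1), cb n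
        = (1/2) * ((∑ n ∈ range (N+1), (if n = 1 then (1:ℝ) else 0))
            + ∑ n ∈ range (N+1), ∑ p ∈ antidiagonal n, cb p.1 * cb p.2) := by
          rw [← Finset.sum_add_distrib, Finset.mul_sum]
          exact Finset.sum_congr rfl fun n _ => key n
      _ ≤ (1/2) * (1 + 1) := by
          gcongr (1/2) * (?_ + ?_)
          · rw [Finset.sum_ite_eq' (range (N+1)) 1 (fun _ => (1:ℝ))]
            split <;> norm_num
          · have hdisj : (↑(range (N+1) : Finset ℕ) : Set ℕ).PairwiseDisjoint
                (fun n => antidiagonal n) := by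
              intro a _ b _ hab
              simp only [Finset.disjoint_left]
              intro p hpa hpb
              exact hab ((Finset.HasAntidiagonal.mem_antidiagonal.mp hpa).symm.trans
                (Finset.HasAntidiagonal.mem_antidiagonal.mp hpb))
            rw [← Finset.sum_biUnion hdisj]
            have hsub : ((range (N+1)).biUnion antidiagonal).filter
                (fun p => p.1 ≠ 0 ∧ p.2 ≠ 0) ⊆ range N ×ˢ range N := by
              intro p hp
              simp only [Finset.mem_filter, Finset.mem_biUnion, Finset.mem_range,
                Finset.HasAntidiagonal.mem_antidiagonal] at hp
              obtain ⟨⟨n, hn, hpn⟩, h1, h2⟩ := hp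
              simp only [Finset.mem_product, Finset.mem_range]
              omega
            have hzero : ∀ p ∈ (range (N+1)).biUnion antidiagonal,
                cb p.1 * cb p.2 ≠ 0 → (p.1 ≠ 0 ∧ p.2 ≠ 0) := by
              intro p _ hne
              constructor <;> rintro h <;> apply hne
              · rw [h, cb_zero, zero_mul]
              · rw [h, cb_zero, mul_zero]
            rw [← Finset.sum_filter_of_ne hzero]
            calc _ ≤ ∑ p ∈ range N ×ˢ range N, cb p.1 * cb p.2 :=
                  Finset.sum_le_sum_of_subset_of_nonneg hsub
                    (fun p _ _ => mul_nonneg (cb_nonneg _) (cb_nonneg _))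
              _ = (∑ n ∈ range N, cb n) * (∑ n ∈ range N, cb n) := by
                  rw [Finset.sum_product]
                  simp [← Finset.mul_sum, ← Finset.sum_mul]
              _ ≤ 1 := by
                  have h0 : 0 ≤ ∑ n ∈ range N, cb n :=
                    Finset.sum_nonneg fun n _ => cb_nonneg n
                  exact mul_le_one₀ ih h0 ih
      _ = 1 := by ring

lemma cb_summable : Summable cb := summable_of_sum_range_le cb_nonneg cb_partial

lemma cb_tsum_le : ∑' n, cb n ≤ 1 := Summable.tsum_le_of_sum_range_le cb_summable cb_partial

section Op

variable {K : Type*} [NormedAddCommGroup K] [InnerProductSpace ℝ K] [CompleteSpace K]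

/-- Cauchy–Schwarz for the semi-inner product induced by a positive operator. -/
lemma op_cs (A : K →L[ℝ] K) (hA : IsSelfAdjoint A) (h0 : ∀ x, 0 ≤ (inner ℝ (A x) x : ℝ))
    (u v : K) : (inner ℝ (A u) v : ℝ)^2 ≤ (inner ℝ (A u) u : ℝ) * (inner ℝ (A v) v : ℝ) := by
  have hsym : (inner ℝ (A v) u : ℝ) = (inner ℝ (A u) v : ℝ) := by
    have h1 : (inner ℝ (A v) u : ℝ) = inner ℝ u (A v) := real_inner_comm _ _
    have h2 : (inner ℝ (A u) v : ℝ) = inner ℝ u (A v) := hA.isSymmetric u v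
    exact h1.trans h2.symm
  have hq : ∀ t : ℝ, 0 ≤ (inner ℝ (A v) v : ℝ) * (t * t) + (2 * (inner ℝ (A u) v : ℝ)) * t
      + (inner ℝ (A u) u : ℝ) := by
    intro t
    have h := h0 (u + t • v)
    have hexp : (inner ℝ (A (u + t • v)) (u + t • v) : ℝ)
        = (inner ℝ (A v) v : ℝ) * (t * t) + (2 * (inner ℝ (A u) v : ℝ)) * t
          + (inner ℝ (A u) u : ℝ) := by
      rw [map_add, map_smul]
      rw [inner_add_left, inner_add_right, inner_add_right]
      rw [real_inner_smul_left, real_inner_smul_right, real_inner_smul_left,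
        real_inner_smul_right, hsym]
      ring
    linarith [hexp ▸ h]
  have hd := discrim_le_zero hq
  rw [discrim] at hd
  nlinarith [hd]

lemma op_kill (A : K →L[ℝ] K) (hA : IsSelfAdjoint A) (h0 : ∀ x, 0 ≤ (inner ℝ (A x) x : ℝ))
    (u : K) (hu : (inner ℝ (A u) u : ℝ) = 0) : A u = 0 := by
  have h := op_cs A hA h0 u (A u)
  rw [hu, zero_mul, real_inner_self_eq_norm_sq] at h
  have h2 : ‖A u‖^2 = 0 := by nlinarith [sq_nonneg (‖A u‖^2)]
  have := pow_eq_zero_iff (n := 2) (by norm_num) |>.mp h2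
  exact norm_eq_zero.mp this

lemma op_norm_le_one (A : K →L[ℝ] K) (hA : IsSelfAdjoint A)
    (h0 : ∀ x, 0 ≤ (inner ℝ (A x) x : ℝ)) (h1 : ∀ x, (inner ℝ (A x) x : ℝ) ≤ ‖x‖ ^ 2) :
    ‖A‖ ≤ 1 := by
  refine ContinuousLinearMap.opNorm_le_bound A zero_le_one fun x => ?_
  rw [one_mul]
  have h := op_cs A hA h0 x (A x)
  rw [real_inner_self_eq_norm_sq] at h
  have h2 := h1 x
  have h3 := h1 (A x)
  have h4 := h0 x
  have h5 := h0 (A x)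
  have h6 : (inner ℝ (A x) x : ℝ) * (inner ℝ (A (A x)) (A x) : ℝ) ≤ ‖x‖^2 * ‖A x‖^2 :=
    mul_le_mul h2 h3 h5 (by positivity)
  by_cases hz : ‖A x‖ = 0
  · rw [hz]; exact norm_nonneg x
  · have hzpos : 0 < ‖A x‖^2 := by positivity
    have h7 : ‖A x‖^2 * ‖A x‖^2 ≤ ‖x‖^2 * ‖A x‖^2 := by nlinarith
    have h8 : ‖A x‖^2 ≤ ‖x‖^2 := le_of_mul_le_mul_right h7 hzpos
    nlinarith [h8, norm_nonneg (A x), norm_nonneg x, sq_nonneg (‖A x‖ - ‖x‖),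
      sq_nonneg (‖A x‖ + ‖x‖)]

end Op

/-- ran X^{1/2} ∩ ran Y^{1/2} = ran (X^{1/2} Y^{1/2}) for nonnegative
contractions X, Y with X + Y = I.  The (unique) nonnegative square roots are
quantified as selfadjoint nonnegative operators Sx, Sy with Sx² = X, Sy² = Y. -/
theorem stmt_2 {K : Type*} [NormedAddCommGroup K] [InnerProductSpace ℝ K] [CompleteSpace K]
    (X Y Sx Sy : K →L[ℝ] K)
    (hXsa : IsSelfAdjoint X) (hYsa : IsSelfAdjoint Y)
    (hX0 : ∀ x, 0 ≤ (inner ℝ (X x) x : ℝ)) (hX1 : ∀ x, (inner ℝ (X x) x : ℝ) ≤ ‖x‖ ^ 2)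
    (hY0 : ∀ x, 0 ≤ (inner ℝ (Y x) x : ℝ)) (hY1 : ∀ x, (inner ℝ (Y x) x : ℝ) ≤ ‖x‖ ^ 2)
    (hXY : X + Y = 1)
    (hSxsa : IsSelfAdjoint Sx) (hSx0 : ∀ x, 0 ≤ (inner ℝ (Sx x) x : ℝ))
    (hSx : Sx.comp Sx = X)
    (hSysa : IsSelfAdjoint Sy) (hSy0 : ∀ x, 0 ≤ (inner ℝ (Sy x) x : ℝ))
    (hSy : Sy.comp Sy = Y) :
    LinearMap.range (Sx : K →ₗ[ℝ] K) ⊓ LinearMap.range (Sy : K →ₗ[ℝ] K) = LinearMap.range ((Sx.comp Sy : K →L[ℝ] K) : K →ₗ[ℝ] K) := by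
  -- switch to ring notation
  have hSx' : Sx * Sx = X := hSx
  have hSy' : Sy * Sy = Y := hSy
  -- the series for sqrt X = 1 - ∑ cb n • Y^n
  have hYnorm : ‖Y‖ ≤ 1 := op_norm_le_one Y hYsa hY0 hY1
  set f : ℕ → K →L[ℝ] K := fun n => cb n • Y^n with hf_def
  have hfnorm : ∀ n, ‖f n‖ ≤ cb n := by
    intro n
    cases n with
    | zero => simp [hf_def, cb_zero]
    | succ m =>
      simp only [hf_def]
      have h0 : ‖cb (m+1) • Y^(m+1)‖ = ‖cb (m+1)‖ * ‖Y^(m+1)‖ := by exact norm_smul (cb (m+1)) (Y^(m+1))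
      rw [h0, Real.norm_of_nonneg (cb_nonneg _)]
      have h1 : ‖Y^(m+1)‖ ≤ ‖Y‖^(m+1) := norm_pow_le' Y (Nat.succ_pos m)
      have h2 : ‖Y‖^(m+1) ≤ 1 := pow_le_one₀ (norm_nonneg Y) hYnorm
      nlinarith [cb_nonneg (m+1), norm_nonneg (Y^(m+1))]
  have hfs : Summable fun n => ‖f n‖ :=
    Summable.of_nonneg_of_le (fun n => norm_nonneg _) hfnorm cb_summable
  have hf : Summable f := hfs.of_norm
  set S : K →L[ℝ] K := ∑' n, f n with hS_def
  have hSsa : IsSelfAdjoint S := by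
    have : star S = S := by
      rw [hS_def, tsum_star]
      refine tsum_congr fun n => ?_
      exact IsSelfAdjoint.smul (star_trivial _) (hYsa.pow n)
    exact this
  have hSnorm : ‖S‖ ≤ 1 := by
    calc ‖S‖ ≤ ∑' n, ‖f n‖ := norm_tsum_le_tsum_norm hfs
      _ ≤ ∑' n, cb n := Summable.tsum_le_tsum hfnorm hfs cb_summable
      _ ≤ 1 := cb_tsum_le
  -- anything commuting with Y commutes with S
  have hmulS : ∀ A : K →L[ℝ] K, A * Y = Y * A → A * S = S * A := by
    intro A hA
    have hl : A * S = ∑' n, A * f n :=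
      (ContinuousLinearMap.mul ℝ (K →L[ℝ] K) A).map_tsum hf
    have hr : S * A = ∑' n, f n * A :=
      ((ContinuousLinearMap.mul ℝ (K →L[ℝ] K)).flip A).map_tsum hf
    rw [hl, hr]
    refine tsum_congr fun n => ?_
    have hc : A * Y^n = Y^n * A := ((Commute.pow_right hA n))
    simp only [hf_def]
    rw [mul_smul_comm, smul_mul_assoc, hc]
  -- the functional equation S*S = (S + S) - Y
  have hSS : S * S = (S + S) - Y := by
    have h1 : S * S = ∑' n, ∑ p ∈ antidiagonal n, f p.1 * f p.2 := by
      rw [hS_def]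
      exact tsum_mul_tsum_eq_tsum_sum_antidiagonal_of_summable_norm hfs hfs
    have h2 : ∀ n, (∑ p ∈ antidiagonal n, f p.1 * f p.2)
        = (2 * cb n) • Y^n - (if n = 1 then (1:ℝ) else 0) • Y^n := by
      intro n
      have : ∑ p ∈ antidiagonal n, f p.1 * f p.2
          = (∑ p ∈ antidiagonal n, cb p.1 * cb p.2) • Y^n := by
        rw [Finset.sum_smul]
        refine Finset.sum_congr rfl fun p hp => ?_
        have hpn : p.1 + p.2 = n := Finset.HasAntidiagonal.mem_antidiagonal.mp hp
        simp only [hf_def]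
        rw [smul_mul_smul_comm, ← pow_add, hpn]
      rw [this, cb_anti, sub_smul]
    have h3 : Summable (fun n => (2 * cb n) • (Y^n : K →L[ℝ] K)) := by
      have : (fun n => (2 * cb n) • (Y^n : K →L[ℝ] K)) = fun n => f n + f n := by
        funext n
        simp only [hf_def]
        rw [two_mul, add_smul]
      rw [this]
      exact hf.add hf
    have h4 : Summable (fun n => (if n = 1 then (1:ℝ) else 0) • (Y^n : K →L[ℝ] K)) := by
      apply summable_of_finite_support
      apply Set.Finite.subset (Set.finite_singleton 1)
      intro n hn
      simp only [Function.mem_support] at hn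
      by_contra h
      have h' : n ≠ 1 := by simpa using h
      exact hn (by rw [if_neg h', zero_smul])
    rw [h1]
    calc ∑' n, ∑ p ∈ antidiagonal n, f p.1 * f p.2
        = ∑' n, ((2 * cb n) • Y^n - (if n = 1 then (1:ℝ) else 0) • Y^n) := tsum_congr h2
      _ = (∑' n, (2 * cb n) • Y^n) - ∑' n, (if n = 1 then (1:ℝ) else 0) • Y^n :=
          Summable.tsum_sub h3 h4
      _ = (S + S) - Y := by
          congr 1
          · have : (fun n => (2 * cb n) • (Y^n : K →L[ℝ] K)) = fun n => f n + f n := by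
              funext n
              simp only [hf_def]
              rw [two_mul, add_smul]
            rw [this, Summable.tsum_add hf hf, hS_def]
          · rw [tsum_eq_single 1 (fun n hn => by rw [if_neg hn, zero_smul])]
            simp
  -- T = 1 - S is a nonnegative selfadjoint square root of X
  set T : K →L[ℝ] K := 1 - S with hT_def
  have hTsa : IsSelfAdjoint T := (IsSelfAdjoint.one (K →L[ℝ] K)).sub hSsa
  have hTT : T * T = X := by
    have hX_eq : X = 1 - Y := by rw [← hXY]; abel
    have : T * T = 1 - S - S + S * S := by rw [hT_def]; noncomm_ring
    rw [this, hSS, hX_eq]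
    abel
  have hT0 : ∀ x, 0 ≤ (inner ℝ (T x) x : ℝ) := by
    intro x
    have hTx : T x = x - S x := by
      rw [hT_def]
      simp [ContinuousLinearMap.sub_apply]
    rw [hTx, inner_sub_left, real_inner_self_eq_norm_sq]
    have h1 : (inner ℝ (S x) x : ℝ) ≤ ‖S x‖ * ‖x‖ := real_inner_le_norm (S x) x
    have h2 : ‖S x‖ ≤ ‖S‖ * ‖x‖ := S.le_opNorm x
    have h3 : ‖S‖ * ‖x‖ ≤ 1 * ‖x‖ :=
      mul_le_mul_of_nonneg_right hSnorm (norm_nonneg x)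
    nlinarith [norm_nonneg x]
  have hmulT : ∀ A : K →L[ℝ] K, A * Y = Y * A → A * T = T * A := by
    intro A hA
    rw [hT_def, mul_sub, sub_mul, mul_one, one_mul, hmulS A hA]
  -- Sx and Sy commute with Y
  have hSyY : Sy * Y = Y * Sy := by rw [← hSy']; exact (mul_assoc Sy Sy Sy).symm
  have hSxY : Sx * Y = Y * Sx := by
    have hY_eq : Y = 1 - X := by rw [← hXY]; abel
    rw [hY_eq, ← hSx', mul_sub, sub_mul, mul_one, one_mul, mul_assoc]
  have hSxT : Sx * T = T * Sx := hmulT Sx hSxY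
  have hSyT : Sy * T = T * Sy := hmulT Sy hSyY
  -- uniqueness: T = Sx
  have hTSx : T = Sx := by
    set R : K →L[ℝ] K := T - Sx with hR_def
    have hRsa : IsSelfAdjoint R := hTsa.sub hSxsa
    have hTR : (T + Sx) * R = 0 := by
      have h : (T + Sx) * R = T * T + Sx * T - T * Sx - Sx * Sx := by
        rw [hR_def]; noncomm_ring
      rw [h, hTT, hSx', hSxT]
      abel
    have hRz : ∀ x, R (R x) = 0 := by
      intro x
      have hzero : (inner ℝ (T (R x)) (R x) : ℝ) + (inner ℝ (Sx (R x)) (R x) : ℝ) = 0 := by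
        have h1 : T (R x) + Sx (R x) = ((T + Sx) * R) x := rfl
        have h2 : ((T + Sx) * R) x = 0 := by rw [hTR]; rfl
        rw [← inner_add_left, h1, h2, inner_zero_left]
      have hT' := hT0 (R x)
      have hSx' := hSx0 (R x)
      have hTz : T (R x) = 0 := op_kill T hTsa hT0 (R x) (by linarith)
      have hSxz : Sx (R x) = 0 := op_kill Sx hSxsa hSx0 (R x) (by linarith)
      have : R (R x) = T (R x) - Sx (R x) := by
        rw [hR_def]; simp [ContinuousLinearMap.sub_apply]
      rw [this, hTz, hSxz, sub_zero]
    have hR0 : R = 0 := by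
      ext x
      have h1 : ‖R x‖^2 = (inner ℝ (R x) (R x) : ℝ) := (real_inner_self_eq_norm_sq (R x)).symm
      have h2 : (inner ℝ (R x) (R x) : ℝ) = (inner ℝ x (R (R x)) : ℝ) := by
        exact hRsa.isSymmetric x (R x)
      rw [hRz x, inner_zero_right] at h2
      have : ‖R x‖ = 0 := by nlinarith [norm_nonneg (R x)]
      simpa using norm_eq_zero.mp this
    have : T - Sx = 0 := hR0
    linear_combination (norm := abel) this
  -- the commutation relation
  have hcomm : Sx * Sy = Sy * Sx := by rw [← hTSx]; exact hSyT.symm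
  -- now the range identity
  apply le_antisymm
  · rintro z hz
    obtain ⟨⟨a, ha⟩, ⟨b, hb⟩⟩ := Submodule.mem_inf.mp hz
    refine ⟨Sy a + Sx b, ?_⟩
    have key : (Sx.comp Sy) (Sy a + Sx b) = Y (Sx a) + X (Sy b) := by
      have e1 : Sx (Sy (Sy a)) = Y (Sx a) := by
        have : Sx * (Sy * Sy) = Y * Sx := by rw [hSy', hSxY]
        calc Sx (Sy (Sy a)) = (Sx * (Sy * Sy)) a := rfl
          _ = (Y * Sx) a := by rw [this]
          _ = Y (Sx a) := rfl
      have e2 : Sx (Sy (Sx b)) = X (Sy b) := by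
        have : Sx * (Sy * Sx) = X * Sy := by
          rw [← hcomm, ← mul_assoc, hSx']
        calc Sx (Sy (Sx b)) = (Sx * (Sy * Sx)) b := rfl
          _ = (X * Sy) b := by rw [this]
          _ = X (Sy b) := rfl
      calc (Sx.comp Sy) (Sy a + Sx b) = Sx (Sy (Sy a + Sx b)) := rfl
        _ = Sx (Sy (Sy a)) + Sx (Sy (Sx b)) := by rw [map_add, map_add]
        _ = Y (Sx a) + X (Sy b) := by rw [e1, e2]
    simp only [ContinuousLinearMap.coe_coe] at ha hb ⊢
    rw [key, ha, hb]
    have : X z + Y z = z := by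
      have := congrArg (fun A : K →L[ℝ] K => A z) hXY
      simpa using this
    rw [add_comm] at this
    exact this
  · rintro x ⟨v, rfl⟩
    refine Submodule.mem_inf.mpr ⟨⟨Sy v, rfl⟩, ⟨Sx v, ?_⟩⟩
    calc Sy (Sx v) = (Sy * Sx) v := rfl
      _ = (Sx * Sy) v := by rw [hcomm]
      _ = (Sx.comp Sy) v := rfl
end

section
/- Let X, Y be bounded nonnegative contractions on a Hilbert space K with X + Y = I. Then the closure of ran X intersected with the closure of ran Y equals the closure of ran(XY). -/
open ContinuousLinearMap in
/-- For a self-adjoint operator, the orthogonal complement of the range is the kernel. -/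
lemma orth_range_eq_ker {K : Type*} [NormedAddCommGroup K] [InnerProductSpace ℝ K]
    [CompleteSpace K] (A : K →L[ℝ] K) (hA : IsSelfAdjoint A) :
    (LinearMap.range (A : K →ₗ[ℝ] K))ᗮ = LinearMap.ker (A : K →ₗ[ℝ] K) := by
  have hsym := hA.isSymmetric
  ext x
  simp only [Submodule.mem_orthogonal, LinearMap.mem_range, LinearMap.mem_ker,
    ContinuousLinearMap.coe_coe]
  constructor
  · intro h
    have h2 : ∀ y : K, (inner ℝ (A y) x : ℝ) = 0 := fun y => h (A y) ⟨y, rfl⟩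
    have h4 : (inner ℝ (A x) (A x) : ℝ) = 0 := (hsym (A x) x).symm.trans (h2 (A x))
    rwa [inner_self_eq_zero] at h4
  · intro h u hu
    obtain ⟨y, rfl⟩ := hu
    exact (hsym y x).trans (by simp [h])

/-- closure(ran X) ∩ closure(ran Y) = closure(ran XY) for nonnegative
contractions X, Y with X + Y = I. -/
theorem stmt_3 {K : Type*} [NormedAddCommGroup K] [InnerProductSpace ℝ K] [CompleteSpace K]
    (X Y : K →L[ℝ] K)
    (hXsa : IsSelfAdjoint X) (hYsa : IsSelfAdjoint Y)
    (hX0 : ∀ x, 0 ≤ (inner ℝ (X x) x : ℝ)) (hX1 : ∀ x, (inner ℝ (X x) x : ℝ) ≤ ‖x‖ ^ 2)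
    (hY0 : ∀ x, 0 ≤ (inner ℝ (Y x) x : ℝ)) (hY1 : ∀ x, (inner ℝ (Y x) x : ℝ) ≤ ‖x‖ ^ 2)
    (hXY : X + Y = 1) :
    (LinearMap.range (X : K →ₗ[ℝ] K)).topologicalClosure ⊓ (LinearMap.range (Y : K →ₗ[ℝ] K)).topologicalClosure
      = (LinearMap.range ((X.comp Y : K →L[ℝ] K) : K →ₗ[ℝ] K)).topologicalClosure := by
  have hY' : Y = 1 - X := by rw [← hXY]; abel
  have hcomm : X * Y = Y * X := by
    rw [hY', mul_sub, sub_mul, mul_one, one_mul]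
  -- XY is self-adjoint
  have hXYsa : IsSelfAdjoint (X.comp Y) := by
    have : X.comp Y = X * Y := rfl
    rw [this]
    rw [IsSelfAdjoint, star_mul, hXsa.star_eq, hYsa.star_eq, hcomm]
  -- kernels: ker (X ∘ Y) = ker X ⊔ ker Y
  have hker : LinearMap.ker ((X.comp Y : K →L[ℝ] K) : K →ₗ[ℝ] K) = LinearMap.ker (X : K →ₗ[ℝ] K) ⊔ LinearMap.ker (Y : K →ₗ[ℝ] K) := by
    apply le_antisymm
    · intro z hz
      have hz' : X (Y z) = 0 := hz
      have h1 : Y z ∈ LinearMap.ker (X : K →ₗ[ℝ] K) := hz'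
      have h2 : X z ∈ LinearMap.ker (Y : K →ₗ[ℝ] K) := by
        have : Y (X z) = X (Y z) := by
          have := congrFun (congrArg DFunLike.coe hcomm) z
          exact this.symm
        simp only [LinearMap.mem_ker, ContinuousLinearMap.coe_coe]
        rw [this, hz']
      have : z = Y z + X z := by
        have := congrFun (congrArg DFunLike.coe hXY) z
        simp at this
        rw [add_comm]
        exact this.symm
      rw [this]
      exact Submodule.add_mem _ (Submodule.mem_sup_left h1) (Submodule.mem_sup_right h2)
    · rw [sup_le_iff]
      constructor
      · intro z hz
        have hz' : X z = 0 := hz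
        have : X (Y z) = Y (X z) := congrFun (congrArg DFunLike.coe hcomm) z
        show X (Y z) = 0
        rw [this, hz', map_zero]
      · intro z hz
        have hz' : Y z = 0 := hz
        show X (Y z) = 0
        rw [hz', map_zero]
  -- closures of ranges via double orthogonal
  rw [← Submodule.orthogonal_orthogonal_eq_closure,
      ← Submodule.orthogonal_orthogonal_eq_closure,
      ← Submodule.orthogonal_orthogonal_eq_closure,
      orth_range_eq_ker X hXsa, orth_range_eq_ker Y hYsa, orth_range_eq_ker _ hXYsa,
      hker, Submodule.inf_orthogonal]
end

section
/- Let X, Y be bounded nonnegative contractions on a Hilbert space K with X + Y = I. If ran X ∩ ran Y = {0}, then X and Y are orthogonal projections. -/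
/-- if ran X ∩ ran Y = {0} for nonnegative contractions X, Y with
X + Y = I, then X and Y are orthogonal projections (selfadjoint idempotents). -/
theorem stmt_4 {K : Type*} [NormedAddCommGroup K] [InnerProductSpace ℝ K] [CompleteSpace K]
    (X Y : K →L[ℝ] K)
    (hXsa : IsSelfAdjoint X) (hYsa : IsSelfAdjoint Y)
    (hX0 : ∀ x, 0 ≤ (inner ℝ (X x) x : ℝ)) (hX1 : ∀ x, (inner ℝ (X x) x : ℝ) ≤ ‖x‖ ^ 2)
    (hY0 : ∀ x, 0 ≤ (inner ℝ (Y x) x : ℝ)) (hY1 : ∀ x, (inner ℝ (Y x) x : ℝ) ≤ ‖x‖ ^ 2)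
    (hXY : X + Y = 1)
    (htriv : LinearMap.range (X : K →ₗ[ℝ] K) ⊓ LinearMap.range (Y : K →ₗ[ℝ] K) = ⊥) :
    (IsSelfAdjoint X ∧ X.comp X = X) ∧ (IsSelfAdjoint Y ∧ Y.comp Y = Y) := by
  have hY : Y = 1 - X := by rw [eq_sub_iff_add_eq, add_comm]; exact hXY
  have hcomm : ∀ z, X (Y z) = Y (X z) := by
    intro z; simp [hY, map_sub]
  have hzero : ∀ z, X (Y z) = 0 := by
    intro z
    have h1 : X (Y z) ∈ LinearMap.range (X : K →ₗ[ℝ] K) := ⟨Y z, rfl⟩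
    have h2 : X (Y z) ∈ LinearMap.range (Y : K →ₗ[ℝ] K) := ⟨X z, (hcomm z).symm⟩
    have hm : X (Y z) ∈ LinearMap.range (X : K →ₗ[ℝ] K) ⊓ LinearMap.range (Y : K →ₗ[ℝ] K) :=
      Submodule.mem_inf.mpr ⟨h1, h2⟩
    rw [htriv] at hm
    simpa using hm
  have hXidem : X.comp X = X := by
    ext z
    have h := hzero z
    rw [hY] at h
    simp only [ContinuousLinearMap.sub_apply, ContinuousLinearMap.one_apply, map_sub,
      sub_eq_zero] at h
    simpa using h.symm
  have hYidem : Y.comp Y = Y := by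
    ext z
    have h := (hcomm z).symm.trans (hzero z)
    have : Y (Y z) = Y z := by
      rw [hY]
      simp only [ContinuousLinearMap.sub_apply, ContinuousLinearMap.one_apply, map_sub]
      rw [hY] at h
      simp only [ContinuousLinearMap.sub_apply, ContinuousLinearMap.one_apply, map_sub,
        sub_eq_zero] at h ⊢
      abel_nf
      rw [← h]
      abel
    simpa using this
  exact ⟨⟨hXsa, hXidem⟩, ⟨hYsa, hYidem⟩⟩
end

section
/- Let X, Y be nonnegative contractions on a Hilbert space K with X + Y = I, with operator range spaces 𝔛 = ran X^{1/2} and 𝔜 = ran Y^{1/2}. The adjoint V* of the isometry V h = (Xh, Yh) : K → 𝔛 × 𝔜 is the addition map V*(f, g) = f + g for f ∈ 𝔛, g ∈ 𝔜. Consequently ‖f + g‖²_K ≤ ‖f‖²_𝔛 + ‖g‖²_𝔜 for all f ∈ 𝔛, g ∈ 𝔜, with equality if and only if f = Xh and g = Yh for some h ∈ K. -/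
open ContinuousLinearMap in
private lemma stmt8_aux {K : Type*} [NormedAddCommGroup K] [InnerProductSpace ℝ K]
    [CompleteSpace K] (S P : K →L[ℝ] K) (hSsa : IsSelfAdjoint S) (hPsa : IsSelfAdjoint P)
    (hP2 : P.comp P = P)
    (hran : LinearMap.range (P : K →ₗ[ℝ] K) = (LinearMap.range (S : K →ₗ[ℝ] K)).topologicalClosure) :
    (∀ u, P (S u) = S u) ∧ (∀ u, S (P u) = S u) ∧ (∀ u, S u = 0 → P u = 0) := by
  have hPP : ∀ w, P (P w) = P w := fun w => by
    have := ContinuousLinearMap.ext_iff.1 hP2 w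
    simpa using this
  have h1 : ∀ u, P (S u) = S u := by
    intro u
    have hmem : S u ∈ LinearMap.range (P : K →ₗ[ℝ] K) := by
      rw [hran]
      exact Submodule.le_topologicalClosure _ ⟨u, rfl⟩
    obtain ⟨w, hw⟩ := hmem
    rw [← hw]; exact hPP w
  have h2 : ∀ u, S (P u) = S u := by
    intro u
    apply ext_inner_right ℝ
    intro t
    calc (inner ℝ (S (P u)) t : ℝ) = inner ℝ (P u) (S t) := hSsa.isSymmetric _ _
      _ = inner ℝ u (P (S t)) := hPsa.isSymmetric _ _
      _ = inner ℝ u (S t) := by rw [h1]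
      _ = inner ℝ (S u) t := (hSsa.isSymmetric _ _).symm
  refine ⟨h1, h2, ?_⟩
  intro u hu
  have key : (inner ℝ u (P u) : ℝ) = 0 := by
    have hPu : P u ∈ (LinearMap.range (S : K →ₗ[ℝ] K)).topologicalClosure := by
      rw [← hran]; exact ⟨u, rfl⟩
    have hle : (LinearMap.range (S : K →ₗ[ℝ] K)).topologicalClosure ≤
        LinearMap.ker ((innerSL ℝ u : K →L[ℝ] ℝ) : K →ₗ[ℝ] ℝ) := by
      apply Submodule.topologicalClosure_minimal
      · rintro w ⟨t, rfl⟩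
        show (inner ℝ u (S t) : ℝ) = 0
        calc (inner ℝ u (S t) : ℝ) = inner ℝ (S u) t := (hSsa.isSymmetric u t).symm
          _ = 0 := by rw [hu, inner_zero_left]
      · exact ContinuousLinearMap.isClosed_ker _
    exact hle hPu
  have hn : ‖P u‖ ^ 2 = 0 := by
    rw [← real_inner_self_eq_norm_sq]
    calc (inner ℝ (P u) (P u) : ℝ) = inner ℝ u (P (P u)) := hPsa.isSymmetric _ _
      _ = inner ℝ u (P u) := by rw [hPP]
      _ = 0 := key
  have := pow_eq_zero_iff (n := 2) (by norm_num) |>.1 hn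
  exact norm_eq_zero.1 this

/-- the adjoint of the isometry V h = (Xh, Yh) : K → 𝔛 × 𝔜 is the addition
map V*(f,g) = f + g, expressed via representatives: every f ∈ 𝔛 is f = Sx φ and every
g ∈ 𝔜 is g = Sy ψ, with de Branges–Rovnyak norms ‖f‖_𝔛 = ‖πX φ‖, ‖g‖_𝔜 = ‖πY ψ‖ and
inner products (f, Xh)_𝔛 = (πX φ, Sx h)_K, (g, Yh)_𝔜 = (πY ψ, Sy h)_K.  The adjoint
formula reads (f + g, h)_K = (f, Xh)_𝔛 + (g, Yh)_𝔜 for all h; consequently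
‖f + g‖²_K ≤ ‖f‖²_𝔛 + ‖g‖²_𝔜, with equality iff f = Xh and g = Yh for some h ∈ K. -/
theorem stmt_8 {K : Type*} [NormedAddCommGroup K] [InnerProductSpace ℝ K] [CompleteSpace K]
    (X Y Sx Sy πX πY : K →L[ℝ] K)
    (hXsa : IsSelfAdjoint X) (hYsa : IsSelfAdjoint Y)
    (hX0 : ∀ x, 0 ≤ (inner ℝ (X x) x : ℝ)) (hX1 : ∀ x, (inner ℝ (X x) x : ℝ) ≤ ‖x‖ ^ 2)
    (hY0 : ∀ x, 0 ≤ (inner ℝ (Y x) x : ℝ)) (hY1 : ∀ x, (inner ℝ (Y x) x : ℝ) ≤ ‖x‖ ^ 2)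
    (hXY : X + Y = 1)
    (hSxsa : IsSelfAdjoint Sx) (hSx0 : ∀ x, 0 ≤ (inner ℝ (Sx x) x : ℝ)) (hSx : Sx.comp Sx = X)
    (hSysa : IsSelfAdjoint Sy) (hSy0 : ∀ x, 0 ≤ (inner ℝ (Sy x) x : ℝ)) (hSy : Sy.comp Sy = Y)
    (hπXsa : IsSelfAdjoint πX) (hπX2 : πX.comp πX = πX)
    (hπXran : LinearMap.range (πX : K →ₗ[ℝ] K) = (LinearMap.range (Sx : K →ₗ[ℝ] K)).topologicalClosure)
    (hπYsa : IsSelfAdjoint πY) (hπY2 : πY.comp πY = πY)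
    (hπYran : LinearMap.range (πY : K →ₗ[ℝ] K) = (LinearMap.range (Sy : K →ₗ[ℝ] K)).topologicalClosure) :
    (∀ φ ψ h : K,
      (inner ℝ (Sx φ + Sy ψ) h : ℝ) = inner ℝ (πX φ) (Sx h) + inner ℝ (πY ψ) (Sy h)) ∧
    (∀ φ ψ : K,
      ‖Sx φ + Sy ψ‖ ^ 2 ≤ ‖πX φ‖ ^ 2 + ‖πY ψ‖ ^ 2 ∧
      (‖Sx φ + Sy ψ‖ ^ 2 = ‖πX φ‖ ^ 2 + ‖πY ψ‖ ^ 2 ↔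
        ∃ h : K, Sx φ = X h ∧ Sy ψ = Y h)) := by
  obtain ⟨hfx1, hfx2, hkx⟩ := stmt8_aux Sx πX hSxsa hπXsa hπX2 hπXran
  obtain ⟨hfy1, hfy2, hky⟩ := stmt8_aux Sy πY hSysa hπYsa hπY2 hπYran
  have hSxSx : ∀ h, Sx (Sx h) = X h := fun h => by
    have := ContinuousLinearMap.ext_iff.1 hSx h; simpa using this
  have hSySy : ∀ h, Sy (Sy h) = Y h := fun h => by
    have := ContinuousLinearMap.ext_iff.1 hSy h; simpa using this
  have hsum : ∀ h : K, X h + Y h = h := fun h => by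
    have := ContinuousLinearMap.ext_iff.1 hXY h; simpa using this
  have part1 : ∀ φ ψ h : K,
      (inner ℝ (Sx φ + Sy ψ) h : ℝ) = inner ℝ (πX φ) (Sx h) + inner ℝ (πY ψ) (Sy h) := by
    intro φ ψ h
    have e1 : (inner ℝ (πX φ) (Sx h) : ℝ) = inner ℝ (Sx φ) h := by
      calc (inner ℝ (πX φ) (Sx h) : ℝ) = inner ℝ (Sx (πX φ)) h := (hSxsa.isSymmetric _ _).symm
        _ = inner ℝ (Sx φ) h := by rw [hfx2]
    have e2 : (inner ℝ (πY ψ) (Sy h) : ℝ) = inner ℝ (Sy ψ) h := by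
      calc (inner ℝ (πY ψ) (Sy h) : ℝ) = inner ℝ (Sy (πY ψ)) h := (hSysa.isSymmetric _ _).symm
        _ = inner ℝ (Sy ψ) h := by rw [hfy2]
    rw [inner_add_left, e1, e2]
  refine ⟨part1, ?_⟩
  intro φ ψ
  set v : K := Sx φ + Sy ψ with hv
  -- norms along a direct application
  have normX : ∀ h : K, ‖Sx h‖ ^ 2 = inner ℝ (X h) h := by
    intro h
    rw [← real_inner_self_eq_norm_sq]
    calc (inner ℝ (Sx h) (Sx h) : ℝ) = inner ℝ h (Sx (Sx h)) := hSxsa.isSymmetric _ _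
      _ = inner ℝ h (X h) := by rw [hSxSx]
      _ = inner ℝ (X h) h := real_inner_comm _ _
  have normY : ∀ h : K, ‖Sy h‖ ^ 2 = inner ℝ (Y h) h := by
    intro h
    rw [← real_inner_self_eq_norm_sq]
    calc (inner ℝ (Sy h) (Sy h) : ℝ) = inner ℝ h (Sy (Sy h)) := hSysa.isSymmetric _ _
      _ = inner ℝ h (Y h) := by rw [hSySy]
      _ = inner ℝ (Y h) h := real_inner_comm _ _
  have normXY : ∀ h : K, ‖Sx h‖ ^ 2 + ‖Sy h‖ ^ 2 = ‖h‖ ^ 2 := by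
    intro h
    rw [normX, normY, ← inner_add_left, hsum, real_inner_self_eq_norm_sq]
  have hv1 : (inner ℝ (πX φ) (Sx v) : ℝ) + inner ℝ (πY ψ) (Sy v) = ‖v‖ ^ 2 := by
    rw [← part1 φ ψ v, ← hv, real_inner_self_eq_norm_sq]
  have key : ‖πX φ - Sx v‖ ^ 2 + ‖πY ψ - Sy v‖ ^ 2 =
      (‖πX φ‖ ^ 2 + ‖πY ψ‖ ^ 2) - ‖v‖ ^ 2 := by
    have e1 := norm_sub_sq_real (πX φ) (Sx v)
    have e2 := norm_sub_sq_real (πY ψ) (Sy v)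
    have e3 := normXY v
    linarith [hv1]
  constructor
  · nlinarith [sq_nonneg ‖πX φ - Sx v‖, sq_nonneg ‖πY ψ - Sy v‖]
  constructor
  · intro heq
    refine ⟨v, ?_, ?_⟩
    · have h0 : ‖πX φ - Sx v‖ ^ 2 = 0 := by
        nlinarith [sq_nonneg ‖πX φ - Sx v‖, sq_nonneg ‖πY ψ - Sy v‖]
      have hx : πX φ = Sx v := by
        have := pow_eq_zero_iff (n := 2) (by norm_num) |>.1 h0
        exact sub_eq_zero.1 (norm_eq_zero.1 this)
      calc Sx φ = Sx (πX φ) := (hfx2 φ).symm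
        _ = Sx (Sx v) := by rw [hx]
        _ = X v := hSxSx v
    · have h0 : ‖πY ψ - Sy v‖ ^ 2 = 0 := by
        nlinarith [sq_nonneg ‖πX φ - Sx v‖, sq_nonneg ‖πY ψ - Sy v‖]
      have hy : πY ψ = Sy v := by
        have := pow_eq_zero_iff (n := 2) (by norm_num) |>.1 h0
        exact sub_eq_zero.1 (norm_eq_zero.1 this)
      calc Sy ψ = Sy (πY ψ) := (hfy2 ψ).symm
        _ = Sy (Sy v) := by rw [hy]
        _ = Y v := hSySy v
  · rintro ⟨h, hxh, hyh⟩
    have hveq : v = h := by rw [hv, hxh, hyh, hsum]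
    have hπxφ : πX φ = Sx h := by
      have hz : Sx (φ - Sx h) = 0 := by
        rw [map_sub, hSxSx, hxh, sub_self]
      have := hkx _ hz
      rw [map_sub, hfx1, sub_eq_zero] at this
      exact this
    have hπyψ : πY ψ = Sy h := by
      have hz : Sy (ψ - Sy h) = 0 := by
        rw [map_sub, hSySy, hyh, sub_self]
      have := hky _ hz
      rw [map_sub, hfy1, sub_eq_zero] at this
      exact this
    rw [hveq, hπxφ, hπyψ, normXY]
end

section
/- Let X, Y be nonnegative contractions on a Hilbert space K with X + Y = I, and let V h = (Xh, Yh) be the isometry from K to 𝔛 × 𝔜. Then the orthogonal complement of ran V in 𝔛 × 𝔜 equals { (−X^{1/2}Y^{1/2}k, X^{1/2}Y^{1/2}k) : k ∈ closure(ran XY) }, and V is surjective if and only if X and Y are orthogonal projections. -/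
set_option maxHeartbeats 1000000
set_option synthInstance.maxHeartbeats 200000

private noncomputable def qcoef : ℕ → ℝ
  | 0 => 1
  | 1 => -(1/2)
  | (n+2) => (-(1/2)) * ∑ i ∈ (Finset.Ioo 0 (n+2)).attach, qcoef i.1 * qcoef (n+2-i.1)
  decreasing_by
  all_goals (have := i.2; simp only [Finset.mem_Ioo] at this; omega)

private lemma qcoef_zero : qcoef 0 = 1 := by simp [qcoef]
private lemma qcoef_one : qcoef 1 = -(1/2) := by simp [qcoef]

private lemma qcoef_succ_succ (n : ℕ) :
    qcoef (n+2) = (-(1/2)) * ∑ i ∈ Finset.Ioo 0 (n+2), qcoef i * qcoef (n+2-i) := by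
  rw [qcoef]
  congr 1
  exact Finset.sum_attach (Finset.Ioo 0 (n+2)) (fun i => qcoef i * qcoef (n+2-i))

private lemma Ioo_reindex (n : ℕ) (f : ℕ → ℝ) :
    ∑ i ∈ Finset.Ioo 0 (n+2), f i = ∑ i ∈ Finset.range (n+1), f (i+1) := by
  have : Finset.Ioo 0 (n+2) = (Finset.range (n+1)).map ⟨Nat.succ, Nat.succ_injective⟩ := by
    ext x
    simp only [Finset.mem_Ioo, Finset.mem_map, Finset.mem_range, Function.Embedding.coeFn_mk]
    constructor
    · rintro ⟨h1, h2⟩; exact ⟨x - 1, by omega, by omega⟩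
    · rintro ⟨a, ha, rfl⟩; omega
  rw [this, Finset.sum_map]
  rfl

private lemma qcoef_nonpos : ∀ n, 1 ≤ n → qcoef n ≤ 0 := by
  intro n
  induction n using Nat.strong_induction_on with
  | _ n ih =>
    match n with
    | 0 => omega
    | 1 => intro _; rw [qcoef_one]; norm_num
    | (m+2) =>
      intro _
      rw [qcoef_succ_succ]
      have hs : 0 ≤ ∑ i ∈ Finset.Ioo 0 (m+2), qcoef i * qcoef (m+2-i) := by
        apply Finset.sum_nonneg
        intro i hi
        simp only [Finset.mem_Ioo] at hi
        have h1 : qcoef i ≤ 0 := ih i (by omega) (by omega)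
        have h2 : qcoef (m+2-i) ≤ 0 := ih (m+2-i) (by omega) (by omega)
        nlinarith
      nlinarith


private lemma qcoef_conv (n : ℕ) :
    ∑ ij ∈ Finset.HasAntidiagonal.antidiagonal (n+2), qcoef ij.1 * qcoef ij.2 = 0 := by
  rw [Finset.Nat.sum_antidiagonal_eq_sum_range_succ_mk]
  have h1 : ∑ k ∈ Finset.range (n+2+1), qcoef k * qcoef (n+2-k)
      = ∑ k ∈ Finset.range (n+2), qcoef k * qcoef (n+2-k) + qcoef (n+2) * qcoef (n+2-(n+2)) :=
    Finset.sum_range_succ _ _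
  have h2 : ∑ k ∈ Finset.range (n+2), qcoef k * qcoef (n+2-k)
      = ∑ i ∈ Finset.range (n+1), qcoef (i+1) * qcoef (n+2-(i+1))
        + qcoef 0 * qcoef (n+2-0) :=
    Finset.sum_range_succ' _ _
  have h3 : ∑ i ∈ Finset.range (n+1), qcoef (i+1) * qcoef (n+2-(i+1))
      = ∑ i ∈ Finset.Ioo 0 (n+2), qcoef i * qcoef (n+2-i) :=
    (Ioo_reindex n (fun i => qcoef i * qcoef (n+2-i))).symm
  have h4 : qcoef (n+2) = (-(1/2)) * ∑ i ∈ Finset.Ioo 0 (n+2), qcoef i * qcoef (n+2-i) :=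
    qcoef_succ_succ n
  rw [h1, h2, h3]
  simp only [Nat.sub_self, Nat.sub_zero, qcoef_zero]
  linarith

private noncomputable def pcoef (n : ℕ) : ℝ := if n = 0 then 0 else -(qcoef n)

private lemma pcoef_nonneg (n : ℕ) : 0 ≤ pcoef n := by
  unfold pcoef
  split
  · exact le_refl 0
  · next h => linarith [qcoef_nonpos n (by omega)]

private lemma pcoef_conv (n : ℕ) :
    pcoef (n+2) = (1/2) * ∑ ij ∈ Finset.HasAntidiagonal.antidiagonal (n+2), pcoef ij.1 * pcoef ij.2 := by
  have key : ∑ ij ∈ Finset.HasAntidiagonal.antidiagonal (n+2), pcoef ij.1 * pcoef ij.2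
      = ∑ i ∈ Finset.Ioo 0 (n+2), qcoef i * qcoef (n+2-i) := by
    rw [Finset.Nat.sum_antidiagonal_eq_sum_range_succ_mk, Finset.sum_range_succ,
      Finset.sum_range_succ']
    have e0 : pcoef 0 * pcoef (n+2-0) = 0 := by simp [pcoef]
    have e1 : pcoef (n+2) * pcoef (n+2-(n+2)) = 0 := by simp [pcoef]
    rw [e0, e1, add_zero, add_zero, ← Ioo_reindex n (fun i => pcoef i * pcoef (n+2-i))]
    apply Finset.sum_congr rfl
    intro i hi
    simp only [Finset.mem_Ioo] at hi
    have p1 : pcoef i = -(qcoef i) := by unfold pcoef; rw [if_neg (by omega : ¬ i = 0)]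
    have p2 : pcoef (n+2-i) = -(qcoef (n+2-i)) := by unfold pcoef; rw [if_neg (by omega : ¬ n+2-i = 0)]
    rw [p1, p2]; ring
  rw [key]
  have := qcoef_succ_succ n
  have hp : pcoef (n+2) = -(qcoef (n+2)) := by simp [pcoef]
  rw [hp, this]; ring

private lemma pcoef_one : pcoef 1 = 1/2 := by
  unfold pcoef; rw [if_neg (by omega : ¬ (1:ℕ) = 0), qcoef_one]; norm_num

private lemma pcoef_term (n : ℕ) :
    pcoef n = (if n = 1 then (1/2:ℝ) else 0)
      + (1/2) * ∑ ij ∈ Finset.HasAntidiagonal.antidiagonal n, pcoef ij.1 * pcoef ij.2 := by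
  match n with
  | 0 => simp [pcoef]
  | 1 =>
    rw [pcoef_one]
    have : ∑ ij ∈ Finset.HasAntidiagonal.antidiagonal 1, pcoef ij.1 * pcoef ij.2 = 0 := by
      rw [Finset.Nat.sum_antidiagonal_eq_sum_range_succ_mk, Finset.sum_range_succ,
        Finset.sum_range_one]
      norm_num [pcoef]
    rw [this]; norm_num
  | (m+2) =>
    rw [if_neg (by omega), zero_add]
    exact pcoef_conv m

private lemma pcoef_sum_le : ∀ N, ∑ n ∈ Finset.range N, pcoef n ≤ 1 := by
  intro N
  induction N using Nat.strong_induction_on with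
  | _ N ih =>
    match N with
    | 0 => simp
    | (N+1) =>
      classical
      have hS : ∑ n ∈ Finset.range (N+1), pcoef n
          = (∑ n ∈ Finset.range (N+1), if n = 1 then (1/2:ℝ) else 0)
            + (1/2) * ∑ n ∈ Finset.range (N+1),
                ∑ ij ∈ Finset.HasAntidiagonal.antidiagonal n, pcoef ij.1 * pcoef ij.2 := by
        rw [Finset.mul_sum, ← Finset.sum_add_distrib]
        exact Finset.sum_congr rfl (fun n _ => pcoef_term n)
      have hind : (∑ n ∈ Finset.range (N+1), if n = 1 then (1/2:ℝ) else 0) ≤ 1/2 := by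
        rw [Finset.sum_ite_eq' (Finset.range (N+1)) 1 (fun _ => (1/2:ℝ))]
        split <;> norm_num
      -- the double sum
      set f : ℕ × ℕ → ℝ := fun ij => pcoef ij.1 * pcoef ij.2 with hf
      have hdisj : (↑(Finset.range (N+1)) : Set ℕ).PairwiseDisjoint Finset.HasAntidiagonal.antidiagonal := by
        intro a _ b _ hab
        simp only [Function.onFun, Finset.disjoint_left]
        intro ij hija hijb
        rw [Finset.HasAntidiagonal.mem_antidiagonal] at hija hijb
        omega
      have hbi : ∑ n ∈ Finset.range (N+1), ∑ ij ∈ Finset.HasAntidiagonal.antidiagonal n, f ij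
          = ∑ ij ∈ (Finset.range (N+1)).biUnion Finset.HasAntidiagonal.antidiagonal, f ij :=
        (Finset.sum_biUnion hdisj).symm
      have hfilter : ∑ ij ∈ ((Finset.range (N+1)).biUnion Finset.HasAntidiagonal.antidiagonal).filter
            (fun ij => ij.1 ≠ 0 ∧ ij.2 ≠ 0), f ij
          = ∑ ij ∈ (Finset.range (N+1)).biUnion Finset.HasAntidiagonal.antidiagonal, f ij := by
        apply Finset.sum_filter_of_ne
        intro ij _ hij
        constructor
        · intro h0; apply hij; rw [hf]; simp only [h0]; simp [pcoef]
        · intro h0; apply hij; rw [hf]; simp only [h0]; simp [pcoef]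
      have hsubset : ((Finset.range (N+1)).biUnion Finset.HasAntidiagonal.antidiagonal).filter
            (fun ij => ij.1 ≠ 0 ∧ ij.2 ≠ 0) ⊆ Finset.range N ×ˢ Finset.range N := by
        intro ij hij
        simp only [Finset.mem_filter, Finset.mem_biUnion, Finset.mem_range,
          Finset.HasAntidiagonal.mem_antidiagonal, Finset.mem_product] at hij ⊢
        obtain ⟨⟨n, hn, hijn⟩, h1, h2⟩ := hij
        omega
      have hle : ∑ ij ∈ ((Finset.range (N+1)).biUnion Finset.HasAntidiagonal.antidiagonal).filter
            (fun ij => ij.1 ≠ 0 ∧ ij.2 ≠ 0), f ij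
          ≤ ∑ ij ∈ Finset.range N ×ˢ Finset.range N, f ij := by
        apply Finset.sum_le_sum_of_subset_of_nonneg hsubset
        intro ij _ _
        exact mul_nonneg (pcoef_nonneg _) (pcoef_nonneg _)
      have hprod : ∑ ij ∈ Finset.range N ×ˢ Finset.range N, f ij
          = (∑ i ∈ Finset.range N, pcoef i) * (∑ i ∈ Finset.range N, pcoef i) := by
        rw [Finset.sum_mul_sum, Finset.sum_product]
      have hSN : 0 ≤ ∑ i ∈ Finset.range N, pcoef i :=
        Finset.sum_nonneg (fun i _ => pcoef_nonneg i)
      have hSN1 : ∑ i ∈ Finset.range N, pcoef i ≤ 1 := ih N (by omega)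
      have hdouble : ∑ n ∈ Finset.range (N+1), ∑ ij ∈ Finset.HasAntidiagonal.antidiagonal n, f ij ≤ 1 := by
        rw [hbi, ← hfilter]
        calc _ ≤ ∑ ij ∈ Finset.range N ×ˢ Finset.range N, f ij := hle
        _ = _ := hprod
        _ ≤ 1 := by nlinarith
      rw [hS]
      linarith

private lemma pcoef_summable : Summable pcoef :=
  summable_of_sum_range_le pcoef_nonneg pcoef_sum_le

private lemma pcoef_tsum_le : ∑' n, pcoef n ≤ 1 :=
  Summable.tsum_le_of_sum_range_le pcoef_summable pcoef_sum_le

private lemma qcoef_abs_summable : Summable (fun n => |qcoef n|) := by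
  apply summable_of_sum_range_le (c := 2)
  · intro n; positivity
  · intro N
    have h1 : ∀ n, |qcoef n| ≤ pcoef n + (if n = 0 then (1:ℝ) else 0) := by
      intro n
      match n with
      | 0 => simp [pcoef, qcoef_zero]
      | (m+1) =>
        have := qcoef_nonpos (m+1) (by omega)
        have hp : pcoef (m+1) = -(qcoef (m+1)) := by
          unfold pcoef; rw [if_neg (by omega : ¬ m+1 = 0)]
        simp only [if_neg (by omega : ¬ m+1 = 0), add_zero, hp]
        rw [abs_of_nonpos this]
    calc ∑ n ∈ Finset.range N, |qcoef n|
        ≤ ∑ n ∈ Finset.range N, (pcoef n + (if n = 0 then (1:ℝ) else 0)) :=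
          Finset.sum_le_sum (fun n _ => h1 n)
      _ = (∑ n ∈ Finset.range N, pcoef n) + ∑ n ∈ Finset.range N, (if n = 0 then (1:ℝ) else 0) :=
          Finset.sum_add_distrib
      _ ≤ 1 + 1 := by
          gcongr
          · exact pcoef_sum_le N
          · rw [Finset.sum_ite_eq' (Finset.range N) 0 (fun _ => (1:ℝ))]
            split <;> norm_num
      _ = 2 := by norm_num

open scoped RealInnerProductSpace

section Ops
variable {K : Type*} [NormedAddCommGroup K] [InnerProductSpace ℝ K] [CompleteSpace K]

private lemma quad_aux (a b : ℝ) (ha : 0 ≤ a) (h : ∀ t : ℝ, 0 ≤ a * t^2 + b * t) : b = 0 := by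
  have h1 : (0:ℝ) < a + 1 := by linarith
  have h2 := h (-(b/(a+1)))
  have h3 : a * (-(b/(a+1)))^2 + b * (-(b/(a+1))) = -(b^2/(a+1)^2) := by
    field_simp
    ring
  rw [h3] at h2
  have h6 : (0:ℝ) < (a+1)^2 := by positivity
  have h4 : b^2/(a+1)^2 ≤ 0 := by linarith
  have h5 := mul_nonpos_of_nonpos_of_nonneg h4 (le_of_lt h6)
  rw [div_mul_cancel₀ _ (ne_of_gt h6)] at h5
  have hb2 : b^2 = 0 := le_antisymm h5 (sq_nonneg b)
  exact (pow_eq_zero_iff two_ne_zero).mp hb2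

/-- positive symmetric operator with vanishing quadratic form at y kills y -/
private lemma form_zero (S : K →L[ℝ] K) (hsym : ∀ u v : K, ⟪S u, v⟫ = ⟪u, S v⟫)
    (h0 : ∀ x, 0 ≤ ⟪S x, x⟫) {y : K} (hy : ⟪S y, y⟫ = 0) : S y = 0 := by
  have key : ∀ t : ℝ, 0 ≤ ⟪S (S y), S y⟫ * t^2 + (2 * ⟪S y, S y⟫) * t := by
    intro t
    have := h0 (y + t • S y)
    have expand : ⟪S (y + t • S y), y + t • S y⟫
        = ⟪S y, y⟫ + t * ⟪S y, S y⟫ + t * ⟪S (S y), y⟫ + t^2 * ⟪S (S y), S y⟫ := by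
      simp only [map_add, map_smul, inner_add_left, inner_add_right,
        real_inner_smul_left, real_inner_smul_right]
      ring
    have hsym2 : ⟪S (S y), y⟫ = ⟪S y, S y⟫ := by
      rw [hsym (S y) y, real_inner_comm]
    rw [expand, hsym2, hy] at this
    linarith
  have hb := quad_aux _ _ (h0 (S y)) key
  have : ⟪S y, S y⟫ = 0 := by linarith
  exact inner_self_eq_zero.mp this

/-- uniqueness of positive square roots of commuting positive operators -/
private lemma sqrt_unique (a b : K →L[ℝ] K)
    (hasym : ∀ u v : K, ⟪a u, v⟫ = ⟪u, a v⟫) (hbsym : ∀ u v : K, ⟪b u, v⟫ = ⟪u, b v⟫)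
    (ha0 : ∀ x, 0 ≤ ⟪a x, x⟫) (hb0 : ∀ x, 0 ≤ ⟪b x, x⟫)
    (hsq : a * a = b * b) (hcomm : a * b = b * a) : a = b := by
  ext x
  set y := a x - b x with hy
  have hzero : a y + b y = 0 := by
    have : a y + b y = (a * a) x - (a * b) x + ((b * a) x - (b * b) x) := by
      simp only [hy, map_sub, ContinuousLinearMap.mul_apply]
    rw [this, hsq, hcomm]
    abel
  have hay' : a y = -(b y) := eq_neg_of_add_eq_zero_left hzero
  have hab : ⟪a y, y⟫ = - ⟪b y, y⟫ := by rw [hay', inner_neg_left]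
  have hay : ⟪a y, y⟫ = 0 := le_antisymm (by linarith [hb0 y]) (ha0 y)
  have hby : ⟪b y, y⟫ = 0 := by linarith
  have hay0 : a y = 0 := form_zero a hasym ha0 hay
  have hby0 : b y = 0 := form_zero b hbsym hb0 hby
  have : ⟪y, y⟫ = 0 := by
    calc ⟪y, y⟫ = ⟪a x - b x, y⟫ := by rw [hy]
    _ = ⟪a x, y⟫ - ⟪b x, y⟫ := inner_sub_left _ _ _
    _ = ⟪x, a y⟫ - ⟪x, b y⟫ := by rw [hasym, hbsym]
    _ = 0 := by rw [hay0, hby0, inner_zero_right, sub_zero]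
  have h7 := inner_self_eq_zero.mp this
  rw [hy] at h7
  exact sub_eq_zero.mp h7

private lemma sqrt_exists (W : K →L[ℝ] K) (hsa : IsSelfAdjoint W)
    (h0 : ∀ x, 0 ≤ ⟪W x, x⟫) (h1 : ∀ x, ⟪W x, x⟫ ≤ ‖x‖^2) :
    ∃ c : K →L[ℝ] K, (∀ u v : K, ⟪c u, v⟫ = ⟪u, c v⟫) ∧ (∀ x, 0 ≤ ⟪c x, x⟫) ∧
      c * c = 1 - W ∧ (∀ T : K →L[ℝ] K, Commute T W → Commute T c) := by
  have hsym : ∀ u v : K, ⟪W u, v⟫ = ⟪u, W v⟫ :=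
    fun u v => ContinuousLinearMap.isSelfAdjoint_iff_isSymmetric.mp hsa u v
  have key : ∀ x, ⟪W x, W x⟫ ≤ ⟪W x, x⟫ := by
    intro x
    have t1 : ⟪W (W x), W x⟫ ≤ ⟪W x, W x⟫ := by
      have := h1 (W x)
      rwa [← real_inner_self_eq_norm_sq (W x)] at this
    have t2 : 0 ≤ ⟪W (x - W x), x - W x⟫ := h0 _
    have t3 : ⟪W (W x), x⟫ = ⟪W x, W x⟫ := hsym (W x) x
    rw [map_sub, inner_sub_left, inner_sub_right, inner_sub_right] at t2
    linarith
  have normW : ∀ x, ‖W x‖ ≤ ‖x‖ := by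
    intro x
    have h2 : ⟪W x, W x⟫ ≤ ‖x‖^2 := le_trans (key x) (h1 x)
    rw [real_inner_self_eq_norm_sq] at h2
    nlinarith [norm_nonneg (W x), norm_nonneg x]
  have normWpow : ∀ n, ∀ x : K, ‖(W^n) x‖ ≤ ‖x‖ := by
    intro n
    induction n with
    | zero => intro x; simp
    | succ n ih =>
      intro x
      have : (W^(n+1)) x = (W^n) (W x) := by rw [pow_succ]; rfl
      rw [this]
      exact le_trans (ih (W x)) (normW x)
  have hWn : ∀ n : ℕ, ‖(W^n : K →L[ℝ] K)‖ ≤ 1 := fun n =>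
    ContinuousLinearMap.opNorm_le_bound _ zero_le_one (by simpa using normWpow n)
  set g : ℕ → (K →L[ℝ] K) := fun n => qcoef n • W^n with hg
  have hgnorm : ∀ n, ‖g n‖ ≤ |qcoef n| := by
    intro n
    show ‖qcoef n • W^n‖ ≤ |qcoef n|
    calc ‖qcoef n • W^n‖ ≤ ‖qcoef n‖ * ‖(W^n : K →L[ℝ] K)‖ := ContinuousLinearMap.opNorm_smul_le _ _
    _ = |qcoef n| * ‖(W^n : K →L[ℝ] K)‖ := by rw [Real.norm_eq_abs]
    _ ≤ |qcoef n| * 1 := mul_le_mul_of_nonneg_left (hWn n) (abs_nonneg _)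
    _ = |qcoef n| := mul_one _
  have hsummable : Summable (fun n => ‖g n‖) :=
    Summable.of_nonneg_of_le (fun n => norm_nonneg _) hgnorm qcoef_abs_summable
  have hgsum : Summable g := Summable.of_norm hsummable
  set c : K →L[ℝ] K := ∑' n, g n with hc
  have hsummable_x : ∀ x : K, Summable (fun n => qcoef n • (W^n) x) := by
    intro x
    apply Summable.of_norm
    apply Summable.of_nonneg_of_le (fun n => norm_nonneg _) _ (qcoef_abs_summable.mul_right ‖x‖)
    intro n
    calc ‖qcoef n • (W^n) x‖ ≤ ‖qcoef n‖ * ‖(W^n) x‖ := norm_smul_le _ _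
    _ = |qcoef n| * ‖(W^n) x‖ := by rw [Real.norm_eq_abs]
    _ ≤ |qcoef n| * ‖x‖ := mul_le_mul_of_nonneg_left (normWpow n x) (abs_nonneg _)
  have happly : ∀ x : K, c x = ∑' n, qcoef n • (W^n) x := by
    intro x
    rw [hc]
    exact ContinuousLinearMap.map_tsum ((ContinuousLinearMap.apply ℝ K) x) hgsum
  have hform : ∀ x : K, ⟪c x, x⟫ = ∑' n, qcoef n * ⟪(W^n) x, x⟫ := by
    intro x
    calc ⟪c x, x⟫ = ⟪x, c x⟫ := real_inner_comm _ _
    _ = ∑' n, ⟪x, qcoef n • (W^n) x⟫ := by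
        rw [happly x]
        exact ContinuousLinearMap.map_tsum (innerSL ℝ x) (hsummable_x x)
    _ = ∑' n, qcoef n * ⟪(W^n) x, x⟫ :=
        tsum_congr (fun n => by rw [real_inner_smul_right, real_inner_comm])
  have hpos : ∀ x : K, 0 ≤ ⟪c x, x⟫ := by
    intro x
    rw [hform x]
    set a : ℕ → ℝ := fun n => qcoef n * ⟪(W^n) x, x⟫ with ha
    have hinner_le : ∀ n, ⟪(W^n) x, x⟫ ≤ ‖x‖^2 := by
      intro n
      calc ⟪(W^n) x, x⟫ ≤ |⟪(W^n) x, x⟫| := le_abs_self _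
      _ ≤ ‖(W^n) x‖ * ‖x‖ := abs_real_inner_le_norm _ _
      _ ≤ ‖x‖ * ‖x‖ := mul_le_mul_of_nonneg_right (normWpow n x) (norm_nonneg x)
      _ = ‖x‖^2 := (sq ‖x‖).symm
    have hsa' : Summable a := by
      apply Summable.of_norm
      apply Summable.of_nonneg_of_le (fun n => norm_nonneg _) _
        (qcoef_abs_summable.mul_right (‖x‖ * ‖x‖))
      intro n
      rw [ha]
      simp only [Real.norm_eq_abs, abs_mul]
      exact mul_le_mul_of_nonneg_left (le_trans (abs_real_inner_le_norm _ _)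
        (mul_le_mul_of_nonneg_right (normWpow n x) (norm_nonneg x))) (abs_nonneg _)
    have ha0 : a 0 = ‖x‖^2 := by
      rw [ha]
      simp [qcoef_zero, real_inner_self_eq_norm_sq]
    have hshift : Summable (fun n => a (n+1)) := (summable_nat_add_iff 1).mpr hsa'
    have hshiftq : Summable (fun n : ℕ => qcoef (n+1) * ‖x‖^2) := by
      apply Summable.mul_right
      have : Summable (fun n => pcoef (n+1)) := (summable_nat_add_iff 1).mpr pcoef_summable
      have e : (fun n : ℕ => qcoef (n+1)) = (fun n => -(pcoef (n+1))) := by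
        funext n
        unfold pcoef
        rw [if_neg (by omega : ¬ n+1 = 0), neg_neg]
      rw [e]
      exact this.neg
    have htail : (∑' n : ℕ, qcoef (n+1) * ‖x‖^2) ≤ ∑' n, a (n+1) := by
      apply Summable.tsum_le_tsum _ hshiftq hshift
      intro n
      rw [ha]
      have hq : qcoef (n+1) ≤ 0 := qcoef_nonpos (n+1) (by omega)
      exact mul_le_mul_of_nonpos_left (hinner_le (n+1)) hq
    have hqsum : (∑' n : ℕ, qcoef (n+1) * ‖x‖^2) = -((∑' n : ℕ, pcoef (n+1)) * ‖x‖^2) := by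
      calc (∑' n : ℕ, qcoef (n+1) * ‖x‖^2) = ∑' n : ℕ, -(pcoef (n+1) * ‖x‖^2) := by
            apply tsum_congr
            intro n
            unfold pcoef
            rw [if_neg (by omega : ¬ n+1 = 0)]
            ring
      _ = -(∑' n : ℕ, pcoef (n+1) * ‖x‖^2) := by rw [tsum_neg]
      _ = -((∑' n : ℕ, pcoef (n+1)) * ‖x‖^2) := by rw [tsum_mul_right]
    have hpsum : (∑' n : ℕ, pcoef (n+1)) ≤ 1 := by
      have h2 := Summable.tsum_eq_zero_add pcoef_summable
      have : pcoef 0 = 0 := by simp [pcoef]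
      rw [this, zero_add] at h2
      rw [← h2]
      exact pcoef_tsum_le
    have hpsum0 : 0 ≤ ∑' n : ℕ, pcoef (n+1) := tsum_nonneg (fun n => pcoef_nonneg _)
    have := Summable.tsum_eq_zero_add hsa'
    rw [this, ha0]
    have hxx : (∑' n : ℕ, pcoef (n+1)) * ‖x‖^2 ≤ ‖x‖^2 := by
      nlinarith [sq_nonneg ‖x‖]
    linarith [le_trans (by linarith : -‖x‖^2 ≤ (∑' n : ℕ, qcoef (n+1) * ‖x‖^2)) htail]
  have hcsa : IsSelfAdjoint c := by
    rw [IsSelfAdjoint, hc, tsum_star]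
    apply tsum_congr
    intro n
    rw [hg]
    simp only [star_smul, star_pow, hsa.star_eq, star_trivial]
  have hsym_c : ∀ u v : K, ⟪c u, v⟫ = ⟪u, c v⟫ :=
    fun u v => ContinuousLinearMap.isSelfAdjoint_iff_isSymmetric.mp hcsa u v
  have hmul : c * c = 1 - W := by
    rw [hc, tsum_mul_tsum_eq_tsum_sum_antidiagonal_of_summable_norm hsummable hsummable]
    have hterm : ∀ n : ℕ, ∑ kl ∈ Finset.HasAntidiagonal.antidiagonal n, g kl.1 * g kl.2
        = (∑ kl ∈ Finset.HasAntidiagonal.antidiagonal n, qcoef kl.1 * qcoef kl.2) • (W^n : K →L[ℝ] K) := by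
      intro n
      rw [Finset.sum_smul]
      apply Finset.sum_congr rfl
      intro kl hkl
      rw [Finset.HasAntidiagonal.mem_antidiagonal] at hkl
      rw [hg]
      simp only [smul_mul_assoc, mul_smul_comm, smul_smul, ← pow_add, hkl]
      rw [mul_comm (qcoef kl.2) (qcoef kl.1)]
    have hzero : ∀ n, n ∉ ({0, 1} : Finset ℕ) →
        (∑ kl ∈ Finset.HasAntidiagonal.antidiagonal n, qcoef kl.1 * qcoef kl.2) • (W^n : K →L[ℝ] K) = 0 := by
      intro n hn
      simp only [Finset.mem_insert, Finset.mem_singleton] at hn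
      match n, hn with
      | (m+2), _ => rw [qcoef_conv m, zero_smul]
    calc (∑' n, ∑ kl ∈ Finset.HasAntidiagonal.antidiagonal n, g kl.1 * g kl.2)
        = ∑' n, (∑ kl ∈ Finset.HasAntidiagonal.antidiagonal n, qcoef kl.1 * qcoef kl.2) • (W^n : K →L[ℝ] K) :=
          tsum_congr hterm
    _ = ∑ n ∈ ({0, 1} : Finset ℕ),
          (∑ kl ∈ Finset.HasAntidiagonal.antidiagonal n, qcoef kl.1 * qcoef kl.2) • (W^n : K →L[ℝ] K) :=
          tsum_eq_sum hzero
    _ = 1 - W := by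
        rw [Finset.sum_insert (by norm_num), Finset.sum_singleton]
        have e0 : ∑ kl ∈ Finset.HasAntidiagonal.antidiagonal 0, qcoef kl.1 * qcoef kl.2 = 1 := by
          simp [qcoef_zero]
        have e1 : ∑ kl ∈ Finset.HasAntidiagonal.antidiagonal 1, qcoef kl.1 * qcoef kl.2 = -1 := by
          rw [Finset.Nat.sum_antidiagonal_eq_sum_range_succ_mk, Finset.sum_range_succ,
            Finset.sum_range_one]
          norm_num [qcoef_zero, qcoef_one]
        rw [e0, e1, pow_zero, pow_one, one_smul, neg_smul, one_smul]
        abel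
  have hcommute : ∀ T : K →L[ℝ] K, Commute T W → Commute T c := by
    intro T hT
    have : ∀ x : K, T (c x) = c (T x) := by
      intro x
      rw [happly x, ContinuousLinearMap.map_tsum T (hsummable_x x), happly (T x)]
      apply tsum_congr
      intro n
      rw [map_smul]
      congr 1
      have h2 := (hT.pow_right n).symm
      calc T ((W^n) x) = (T * W^n) x := rfl
      _ = (W^n * T) x := by rw [h2.eq]
      _ = (W^n) (T x) := rfl
    ext x
    exact (this x).symm ▸ rfl
  exact ⟨c, hsym_c, hpos, hmul, hcommute⟩

private lemma range_solve (T : K →L[ℝ] K) (hsym : ∀ u v : K, ⟪T u, v⟫ = ⟪u, T v⟫)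
    (w : K) (C : ℝ) (hC : ∀ u, |⟪w, u⟫| ≤ C * ‖T u‖) :
    ∃ k ∈ (LinearMap.range (T : K →ₗ[ℝ] K)).topologicalClosure, T k = w := by
  set R : Submodule ℝ K := LinearMap.range (T : K →ₗ[ℝ] K) with hR
  set N : Submodule ℝ K := R.topologicalClosure with hN
  have wd : ∀ u u' : K, T u = T u' → ⟪w, u⟫ = ⟪w, u'⟫ := by
    intro u u' huu
    have h2 : T (u - u') = 0 := by rw [map_sub, huu, sub_self]
    have h3 := hC (u - u')
    rw [h2, norm_zero, mul_zero] at h3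
    have h4 : ⟪w, u - u'⟫ = 0 := abs_eq_zero.mp (le_antisymm h3 (abs_nonneg _))
    rw [inner_sub_right] at h4
    linarith
  have hpre : ∀ v : ↥R, ∃ u : K, T u = (v : K) := fun v => LinearMap.mem_range.mp v.2
  choose pre hpre' using hpre
  have hadd : ∀ v v' : ↥R, ⟪w, pre (v + v')⟫ = ⟪w, pre v⟫ + ⟪w, pre v'⟫ := by
    intro v v'
    have : T (pre (v + v')) = T (pre v + pre v') := by
      rw [map_add, hpre', hpre', hpre']
      rfl
    rw [wd _ _ this, inner_add_right]
  have hsmul : ∀ (r : ℝ) (v : ↥R), ⟪w, pre (r • v)⟫ = r * ⟪w, pre v⟫ := by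
    intro r v
    have : T (pre (r • v)) = T (r • pre v) := by
      rw [map_smul, hpre', hpre']
      rfl
    rw [wd _ _ this, real_inner_smul_right]
  have hbound : ∀ v : ↥R, ‖⟪w, pre v⟫‖ ≤ C * ‖v‖ := by
    intro v
    rw [Real.norm_eq_abs, Submodule.coe_norm, ← hpre' v]
    exact hC (pre v)
  set f₀ : ↥R →ₗ[ℝ] ℝ :=
    { toFun := fun v => ⟪w, pre v⟫
      map_add' := hadd
      map_smul' := hsmul } with hf₀
  set fc : ↥R →L[ℝ] ℝ := f₀.mkContinuous C hbound with hfc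
  have hle : R ≤ N := Submodule.le_topologicalClosure R
  have enorm : ∀ v : ↥R, ‖(Submodule.inclusion hle v : ↥N)‖ = ‖v‖ := by
    intro v
    rw [Submodule.coe_norm, Submodule.coe_norm]
    rfl
  set e : ↥R →L[ℝ] ↥N :=
    (Submodule.inclusion hle).mkContinuous 1 (fun v => by rw [enorm v, one_mul]) with he
  have ecoe : ∀ v : ↥R, ((e v : ↥N) : K) = (v : K) := fun v => rfl
  have hiso : Isometry ⇑e := AddMonoidHomClass.isometry_of_norm e (fun v => enorm v)
  have hui : IsUniformInducing ⇑e := hiso.isUniformInducing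
  have hdense : DenseRange ⇑e := by
    intro x
    have hx : (x : K) ∈ closure (R : Set K) := by
      rw [← Submodule.topologicalClosure_coe]
      exact x.2
    rw [mem_closure_iff_seq_limit] at hx
    obtain ⟨seq, hseqmem, hseqlim⟩ := hx
    have htd : Filter.Tendsto (fun n => e ⟨seq n, hseqmem n⟩) Filter.atTop (nhds x) := by
      rw [tendsto_subtype_rng]
      exact hseqlim
    exact mem_closure_of_tendsto htd (Filter.Eventually.of_forall (fun n => Set.mem_range_self _))
  haveI : CompleteSpace ↥N := (Submodule.isClosed_topologicalClosure R).completeSpace_coe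
  set F : ↥N →L[ℝ] ℝ := fc.extend e with hF
  set k' : ↥N := (InnerProductSpace.toDual ℝ ↥N).symm F with hk'
  refine ⟨(k' : K), k'.2, ?_⟩
  have claim : ∀ u : K, ⟪T (k' : K), u⟫ = ⟪w, u⟫ := by
    intro u
    have hmem : T u ∈ R := LinearMap.mem_range.mpr ⟨u, rfl⟩
    set vR : ↥R := ⟨T u, hmem⟩ with hvR
    have h1 : F (e vR) = fc vR := ContinuousLinearMap.extend_eq fc hdense hui vR
    have h2 : ⟪k', e vR⟫ = F (e vR) := InnerProductSpace.toDual_symm_apply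
    have h3 : fc vR = ⟪w, pre vR⟫ := rfl
    have h4 : ⟪w, pre vR⟫ = ⟪w, u⟫ := wd _ _ (by rw [hpre' vR])
    calc ⟪T (k' : K), u⟫ = ⟪(k' : K), T u⟫ := hsym _ _
    _ = ⟪k', e vR⟫ := by rw [Submodule.coe_inner, ecoe vR]
    _ = ⟪w, u⟫ := by rw [h2, h1, h3, h4]
  exact ext_inner_right ℝ claim

private lemma closure_range_eq (S R : K →L[ℝ] K)
    (hS : ∀ u v : K, ⟪S u, v⟫ = ⟪u, S v⟫) (hR : ∀ u v : K, ⟪R u, v⟫ = ⟪u, R v⟫)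
    (hker : ∀ v, S v = 0 ↔ R v = 0) :
    (LinearMap.range (S : K →ₗ[ℝ] K)).topologicalClosure = (LinearMap.range (R : K →ₗ[ℝ] K)).topologicalClosure := by
  have key : ∀ (S' : K →L[ℝ] K), (∀ u v : K, ⟪S' u, v⟫ = ⟪u, S' v⟫) →
      ∀ v : K, (v ∈ (LinearMap.range (S' : K →ₗ[ℝ] K))ᗮ ↔ S' v = 0) := by
    intro S' hS' v
    rw [Submodule.mem_orthogonal]
    constructor
    · intro h
      have h1 := h (S' (S' v)) (LinearMap.mem_range.mpr ⟨S' v, rfl⟩)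
      rw [hS' (S' v) v] at h1
      exact inner_self_eq_zero.mp h1
    · intro h u hu
      obtain ⟨y, rfl⟩ := LinearMap.mem_range.mp hu
      change ⟪S' y, v⟫ = 0; rw [hS' y v, h, inner_zero_right]
  rw [← Submodule.orthogonal_orthogonal_eq_closure, ← Submodule.orthogonal_orthogonal_eq_closure]
  congr 1
  ext v
  rw [key S hS v, key R hR v]
  exact hker v

private lemma sqrt_norm_le (S P : K →L[ℝ] K)
    (hssym : ∀ u v : K, ⟪S u, v⟫ = ⟪u, S v⟫) (hSP : S.comp S = P)
    (hP1 : ∀ x, ⟪P x, x⟫ ≤ ‖x‖^2) : ∀ v, ‖S v‖ ≤ ‖v‖ := by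
  intro v
  have hSS : S (S v) = P v := by rw [← hSP]; rfl
  have h1 : ⟪S v, S v⟫ = ⟪P v, v⟫ := by
    rw [hssym v (S v), hSS, real_inner_comm]
  have h2 : ‖S v‖^2 ≤ ‖v‖^2 := by
    rw [← real_inner_self_eq_norm_sq, h1]
    exact hP1 v
  nlinarith [norm_nonneg (S v), norm_nonneg v]

private lemma proj_sqrt (S P : K →L[ℝ] K) (hssa : IsSelfAdjoint S)
    (hS0 : ∀ x, 0 ≤ ⟪S x, x⟫) (hSP : S.comp S = P)
    (hP1 : ∀ x, ⟪P x, x⟫ ≤ ‖x‖^2) (hPP : P.comp P = P) : S = P := by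
  have hssym : ∀ u v : K, ⟪S u, v⟫ = ⟪u, S v⟫ :=
    fun u v => ContinuousLinearMap.isSelfAdjoint_iff_isSymmetric.mp hssa u v
  have normS := sqrt_norm_le S P hssym hSP hP1
  have hP2 : S^2 = P := by rw [pow_two, ContinuousLinearMap.mul_def]; exact hSP
  have hPP' : P * P = P := by rw [ContinuousLinearMap.mul_def]; exact hPP
  have h4 : S^4 = S^2 := by
    have e : S^4 = S^2 * S^2 := by rw [← pow_add]
    rw [e, hP2, hPP', ← hP2]
  have p2 : ∀ v : K, (S^2) v = S (S v) := fun v => by rw [pow_two]; rfl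
  have p3 : ∀ v : K, (S^3) v = S (S (S v)) := by
    intro v
    rw [pow_succ, ContinuousLinearMap.mul_apply, p2]
  set Cc : K →L[ℝ] K := S^2 - S^3 with hCc
  have hCsq : Cc * Cc = Cc + Cc := by
    have h5 : S^5 = S^3 := by
      have e1 : S^5 = S^4 * S := pow_succ S 4
      rw [e1, h4, ← pow_succ]
    have h6 : S^6 = S^2 := by
      have e1 : S^6 = S^5 * S := pow_succ S 5
      rw [e1, h5, ← pow_succ, h4]
    have expand : Cc * Cc = S^4 - S^5 - S^5 + S^6 := by rw [hCc]; noncomm_ring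
    rw [expand, h4, h5, h6, hCc]
    noncomm_ring
  have hSle : ∀ u : K, ⟪S u, u⟫ ≤ ‖u‖^2 := by
    intro u
    calc ⟪S u, u⟫ ≤ |⟪S u, u⟫| := le_abs_self _
    _ ≤ ‖S u‖ * ‖u‖ := abs_real_inner_le_norm _ _
    _ ≤ ‖u‖ * ‖u‖ := mul_le_mul_of_nonneg_right (normS u) (norm_nonneg u)
    _ = ‖u‖^2 := (sq ‖u‖).symm
  have hCform : ∀ x : K, ⟪Cc x, x⟫ = ⟪S x, S x⟫ - ⟪S (S x), S x⟫ := by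
    intro x
    rw [hCc]
    rw [ContinuousLinearMap.sub_apply, p2, p3, inner_sub_left,
      hssym (S x) x, hssym (S (S x)) x]
  have hCle : ∀ x : K, ⟪Cc x, x⟫ ≤ ‖x‖^2 := by
    intro x
    rw [hCform x]
    have e1 : ⟪S x, S x⟫ = ‖S x‖^2 := real_inner_self_eq_norm_sq _
    have e2 : 0 ≤ ⟪S (S x), S x⟫ := hS0 (S x)
    have e3 : ‖S x‖ ≤ ‖x‖ := normS x
    nlinarith [norm_nonneg (S x), norm_nonneg x]
  have hCzero : ∀ x : K, Cc x = 0 := by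
    intro x
    have h1 := hCle (Cc x)
    have h2 : Cc (Cc x) = Cc x + Cc x := by
      have := ContinuousLinearMap.ext_iff.mp hCsq x
      rw [ContinuousLinearMap.mul_apply, ContinuousLinearMap.add_apply] at this
      exact this
    have h3 : ⟪Cc (Cc x), Cc x⟫ = ‖Cc x‖^2 + ‖Cc x‖^2 := by
      rw [h2, inner_add_left, real_inner_self_eq_norm_sq]
    have h4 : ‖Cc x‖^2 ≤ 0 := by
      rw [h3] at h1
      linarith
    have h5 : ‖Cc x‖ = 0 := by nlinarith [norm_nonneg (Cc x)]
    exact norm_eq_zero.mp h5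
  have hCop : Cc = 0 := ContinuousLinearMap.ext hCzero
  set D : K →L[ℝ] K := S - S^2 with hD
  have hDsq : D * D = 0 := by
    have expand : D * D = (S^2 - S^3) + (S^2 - S^3) - (S^2 - S^4) := by
      rw [hD]; noncomm_ring
    rw [expand, ← hCc, hCop, h4, sub_self, sub_zero, add_zero]
  have hDsym : ∀ u v : K, ⟪D u, v⟫ = ⟪u, D v⟫ := by
    intro u v
    rw [hD, ContinuousLinearMap.sub_apply, ContinuousLinearMap.sub_apply, p2, p2,
      inner_sub_left, inner_sub_right, hssym u v, hssym (S u) v, hssym u (S v)]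
  have hDzero : ∀ x : K, D x = 0 := by
    intro x
    have h1 : ⟪D x, D x⟫ = ⟪x, D (D x)⟫ := hDsym x (D x)
    have h2 : D (D x) = 0 := by
      have := ContinuousLinearMap.ext_iff.mp hDsq x
      rw [ContinuousLinearMap.mul_apply] at this
      rw [this]
      rfl
    rw [h2, inner_zero_right] at h1
    exact inner_self_eq_zero.mp h1
  ext x
  have := hDzero x
  rw [hD, ContinuousLinearMap.sub_apply, sub_eq_zero, hP2] at this
  exact this

end Ops

/-- the orthogonal complement of ran V in 𝔛 × 𝔜, for the column isometry
V h = (Xh, Yh), is { (−X^{1/2}Y^{1/2}k, X^{1/2}Y^{1/2}k) : k ∈ closure(ran XY) };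
pairs in 𝔛 × 𝔜 are represented by their canonical representatives φ ∈ closure(ran Sx),
ψ ∈ closure(ran Sy) (so the pair is (Sx φ, Sy ψ) and the 𝔛 × 𝔜-inner product with
V h is (φ, Sx h)_K + (ψ, Sy h)_K).  Moreover V is surjective (i.e., every pair
(Sx φ, Sy ψ) ∈ 𝔛 × 𝔜 is of the form (Xh, Yh)) iff X and Y are orthogonal projections. -/
theorem stmt_9 {K : Type*} [NormedAddCommGroup K] [InnerProductSpace ℝ K] [CompleteSpace K]
    (X Y Sx Sy : K →L[ℝ] K)
    (hXsa : IsSelfAdjoint X) (hYsa : IsSelfAdjoint Y)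
    (hX0 : ∀ x, 0 ≤ (inner ℝ (X x) x : ℝ)) (hX1 : ∀ x, (inner ℝ (X x) x : ℝ) ≤ ‖x‖ ^ 2)
    (hY0 : ∀ x, 0 ≤ (inner ℝ (Y x) x : ℝ)) (hY1 : ∀ x, (inner ℝ (Y x) x : ℝ) ≤ ‖x‖ ^ 2)
    (hXY : X + Y = 1)
    (hSxsa : IsSelfAdjoint Sx) (hSx0 : ∀ x, 0 ≤ (inner ℝ (Sx x) x : ℝ)) (hSx : Sx.comp Sx = X)
    (hSysa : IsSelfAdjoint Sy) (hSy0 : ∀ x, 0 ≤ (inner ℝ (Sy x) x : ℝ)) (hSy : Sy.comp Sy = Y) :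
    (∀ φ ∈ (LinearMap.range (Sx : K →ₗ[ℝ] K)).topologicalClosure,
      ∀ ψ ∈ (LinearMap.range (Sy : K →ₗ[ℝ] K)).topologicalClosure,
      ((∀ h : K, (inner ℝ φ (Sx h) : ℝ) + inner ℝ ψ (Sy h) = 0) ↔
        ∃ k ∈ (LinearMap.range ((X.comp Y : K →L[ℝ] K) : K →ₗ[ℝ] K)).topologicalClosure,
          Sx φ = -(Sx (Sy k)) ∧ Sy ψ = Sx (Sy k))) ∧
    ((∀ φ ψ : K, ∃ h : K, X h = Sx φ ∧ Y h = Sy ψ) ↔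
      (X.comp X = X ∧ Y.comp Y = Y)) := by
  have symSx : ∀ u v : K, ⟪Sx u, v⟫ = ⟪u, Sx v⟫ :=
    fun u v => ContinuousLinearMap.isSelfAdjoint_iff_isSymmetric.mp hSxsa u v
  have symSy : ∀ u v : K, ⟪Sy u, v⟫ = ⟪u, Sy v⟫ :=
    fun u v => ContinuousLinearMap.isSelfAdjoint_iff_isSymmetric.mp hSysa u v
  have hSx' : Sx * Sx = X := by rw [ContinuousLinearMap.mul_def]; exact hSx
  have hSy' : Sy * Sy = Y := by rw [ContinuousLinearMap.mul_def]; exact hSy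
  have normSx : ∀ v, ‖Sx v‖ ≤ ‖v‖ := sqrt_norm_le Sx X symSx hSx hX1
  have normSy : ∀ v, ‖Sy v‖ ≤ ‖v‖ := sqrt_norm_le Sy Y symSy hSy hY1
  have happ : ∀ v : K, X v + Y v = v := by
    intro v
    have h2 := ContinuousLinearMap.ext_iff.mp hXY v
    rw [ContinuousLinearMap.add_apply] at h2
    calc X v + Y v = (1 : K →L[ℝ] K) v := h2
    _ = v := rfl
  -- commutation of the two square roots
  obtain ⟨c, hcsym, hcpos, hcsq, hccomm⟩ := sqrt_exists X hXsa hX0 hX1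
  have hYX : Y = 1 - X := eq_sub_of_add_eq' hXY
  have hcY : c * c = Y := by rw [hcsq, ← hYX]
  have hX1Y : X = 1 - Sy * Sy := by rw [hSy']; exact eq_sub_of_add_eq hXY
  have hSyX : Commute Sy X := by
    rw [hX1Y]
    exact (Commute.one_right Sy).sub_right ((Commute.refl Sy).mul_right (Commute.refl Sy))
  have hSyc : Sy = c := by
    refine sqrt_unique Sy c symSy hcsym hSy0 hcpos ?_ (hccomm Sy hSyX).eq
    rw [hSy', hcY]
  have hSxX : Commute Sx X := by
    rw [← hSx']
    exact (Commute.refl Sx).mul_right (Commute.refl Sx)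
  have hcomm : Sx * Sy = Sy * Sx := by
    rw [hSyc]
    exact (hccomm Sx hSxX).eq
  constructor
  · -- part 1
    intro φ _ ψ _
    constructor
    · -- forward : orthogonality condition gives the k
      intro h0
      have hsum : Sx φ + Sy ψ = 0 := by
        have h1 := h0 (Sx φ + Sy ψ)
        rw [← symSx φ (Sx φ + Sy ψ), ← symSy ψ (Sx φ + Sy ψ), ← inner_add_left] at h1
        exact inner_self_eq_zero.mp h1
      set T : K →L[ℝ] K := Sx * Sy with hT
      have hc2 : Sx * Sy = Sy * Sx := hT.symm.trans hcomm
      have symT : ∀ u v : K, ⟪T u, v⟫ = ⟪u, T v⟫ := by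
        intro u v
        have e1 : Sy (Sx v) = Sx (Sy v) := (ContinuousLinearMap.ext_iff.mp hcomm v).symm
        calc ⟪Sx (Sy u), v⟫ = ⟪Sy u, Sx v⟫ := symSx _ _
        _ = ⟪u, Sy (Sx v)⟫ := symSy _ _
        _ = ⟪u, Sx (Sy v)⟫ := by rw [e1]
      set w : K := Sy ψ with hw0
      have hw : Sx φ = -w := eq_neg_of_add_eq_zero_left hsum
      have hid1 : Sy * X = Sx * T := by
        calc Sy * X = Sy * (Sx * Sx) := by rw [hSx']
        _ = (Sy * Sx) * Sx := (mul_assoc _ _ _).symm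
        _ = (Sx * Sy) * Sx := by rw [hc2]
        _ = Sx * (Sy * Sx) := mul_assoc _ _ _
        _ = Sx * (Sx * Sy) := by rw [hc2]
        _ = Sx * T := by rw [← hT]
      have hid2 : Sx * Y = Sy * T := by
        calc Sx * Y = Sx * (Sy * Sy) := by rw [hSy']
        _ = (Sx * Sy) * Sy := (mul_assoc _ _ _).symm
        _ = (Sy * Sx) * Sy := by rw [hc2]
        _ = Sy * (Sx * Sy) := mul_assoc _ _ _
        _ = Sy * T := by rw [← hT]
      have bound : ∀ u, |⟪w, u⟫| ≤ (‖ψ‖ + ‖φ‖) * ‖T u‖ := by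
        intro u
        have hu : X u + Y u = u := happ u
        have d1 : ⟪w, X u⟫ = ⟪ψ, Sx (T u)⟫ := by
          have e1 : Sy (X u) = Sx (T u) := ContinuousLinearMap.ext_iff.mp hid1 u
          rw [hw0, symSy ψ (X u), e1]
        have d2 : ⟪w, Y u⟫ = -⟪φ, Sy (T u)⟫ := by
          have e1 : Sx (Y u) = Sy (T u) := ContinuousLinearMap.ext_iff.mp hid2 u
          have e2 : w = -(Sx φ) := by rw [hw]; rw [neg_neg]
          rw [e2, inner_neg_left, symSx φ (Y u), e1]
        have split : ⟪w, u⟫ = ⟪w, X u⟫ + ⟪w, Y u⟫ := by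
          rw [← inner_add_right, hu]
        have b1 : |⟪ψ, Sx (T u)⟫| ≤ ‖ψ‖ * ‖T u‖ := by
          calc |⟪ψ, Sx (T u)⟫| ≤ ‖ψ‖ * ‖Sx (T u)‖ := abs_real_inner_le_norm _ _
          _ ≤ ‖ψ‖ * ‖T u‖ := mul_le_mul_of_nonneg_left (normSx _) (norm_nonneg _)
        have b2 : |⟪φ, Sy (T u)⟫| ≤ ‖φ‖ * ‖T u‖ := by
          calc |⟪φ, Sy (T u)⟫| ≤ ‖φ‖ * ‖Sy (T u)‖ := abs_real_inner_le_norm _ _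
          _ ≤ ‖φ‖ * ‖T u‖ := mul_le_mul_of_nonneg_left (normSy _) (norm_nonneg _)
        calc |⟪w, u⟫| = |⟪w, X u⟫ + ⟪w, Y u⟫| := by rw [split]
        _ ≤ |⟪w, X u⟫| + |⟪w, Y u⟫| := abs_add_le _ _
        _ = |⟪ψ, Sx (T u)⟫| + |⟪φ, Sy (T u)⟫| := by rw [d1, d2, abs_neg]
        _ ≤ ‖ψ‖ * ‖T u‖ + ‖φ‖ * ‖T u‖ := add_le_add b1 b2
        _ = (‖ψ‖ + ‖φ‖) * ‖T u‖ := by ring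
      obtain ⟨k, hkmem, hkT⟩ := range_solve T symT w (‖ψ‖ + ‖φ‖) bound
      have hTT : T * T = X * Y := by
        calc T * T = (Sx * Sy) * (Sx * Sy) := by rw [hT]
        _ = Sx * (Sy * (Sx * Sy)) := mul_assoc _ _ _
        _ = Sx * ((Sy * Sx) * Sy) := by rw [mul_assoc]
        _ = Sx * ((Sx * Sy) * Sy) := by rw [hc2]
        _ = Sx * (Sx * (Sy * Sy)) := by rw [mul_assoc]
        _ = (Sx * Sx) * (Sy * Sy) := (mul_assoc _ _ _).symm
        _ = X * Y := by rw [hSx', hSy']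
      have hXYapp : ∀ v : K, (X.comp Y) v = T (T v) := by
        intro v
        have h2 := ContinuousLinearMap.ext_iff.mp hTT v
        calc (X.comp Y) v = (X * Y) v := rfl
        _ = (T * T) v := h2.symm
        _ = T (T v) := rfl
      have symXY : ∀ u v : K, ⟪(X.comp Y) u, v⟫ = ⟪u, (X.comp Y) v⟫ := by
        intro u v
        rw [hXYapp u, hXYapp v, symT (T u) v, symT u (T v)]
      have hker : ∀ v, T v = 0 ↔ (X.comp Y) v = 0 := by
        intro v
        constructor
        · intro h
          rw [hXYapp v, h, map_zero]
        · intro h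
          have h1 : ⟪T v, T v⟫ = ⟪v, (X.comp Y) v⟫ := by
            rw [symT v (T v), hXYapp v]
          rw [h, inner_zero_right] at h1
          exact inner_self_eq_zero.mp h1
      have hclo := closure_range_eq T (X.comp Y) symT symXY hker
      rw [hclo] at hkmem
      refine ⟨k, hkmem, ?_, ?_⟩
      · rw [show Sx (Sy k) = w from hkT]
        exact hw
      · rw [show Sx (Sy k) = w from hkT]
    · -- backward : such a k kills the inner products
      rintro ⟨k, -, h1, h2⟩ h
      rw [← symSx φ h, ← symSy ψ h, h1, h2, inner_neg_left]
      ring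
  · -- part 2 : surjectivity iff projections
    constructor
    · intro hsurj
      have hYSx : ∀ v, Y (Sx v) = 0 := by
        intro v
        obtain ⟨h, hXh, hYh⟩ := hsurj v 0
        rw [map_zero] at hYh
        have hu := happ h
        rw [hYh, add_zero] at hu
        have hh : h = Sx v := hu.symm.trans hXh
        rw [hh] at hYh
        exact hYh
      have hYX0 : ∀ v, Y (X v) = 0 := by
        intro v
        have e : X v = Sx (Sx v) := (ContinuousLinearMap.ext_iff.mp hSx v).symm
        rw [e]
        exact hYSx (Sx v)
      have hXX : X.comp X = X := by
        ext v
        have hu := happ (X v)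
        rw [hYX0 v, add_zero] at hu
        exact hu
      have hXXv : ∀ v : K, X (X v) = X v := fun v => ContinuousLinearMap.ext_iff.mp hXX v
      have hXY0 : ∀ v, X (Y v) = 0 := by
        intro v
        have e : Y v = v - X v := eq_sub_of_add_eq' (happ v)
        rw [e, map_sub, hXXv v, sub_self]
      refine ⟨hXX, ?_⟩
      ext v
      have e : Y (Y v) = Y v - X (Y v) := eq_sub_of_add_eq' (happ (Y v)) ▸ rfl
      show Y (Y v) = Y v
      have e2 : Y (Y v) = Y v - X (Y v) := by
        have h3 := happ (Y v)
        have := eq_sub_of_add_eq' h3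
        exact this
      rw [e2, hXY0 v, sub_zero]
    · rintro ⟨hXX, hYY⟩ φ ψ
      have hSxX : Sx = X := proj_sqrt Sx X hSxsa hSx0 hSx hX1 hXX
      have hSyY : Sy = Y := proj_sqrt Sy Y hSysa hSy0 hSy hY1 hYY
      have hXXv : ∀ v : K, X (X v) = X v := fun v => ContinuousLinearMap.ext_iff.mp hXX v
      have hYYv : ∀ v : K, Y (Y v) = Y v := fun v => ContinuousLinearMap.ext_iff.mp hYY v
      have hXY0 : ∀ v, X (Y v) = 0 := by
        intro v
        have e : Y v = v - X v := eq_sub_of_add_eq' (happ v)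
        rw [e, map_sub, hXXv v, sub_self]
      have hYX0 : ∀ v, Y (X v) = 0 := by
        intro v
        have e : Y (X v) = X v - X (X v) := eq_sub_of_add_eq' (happ (X v))
        rw [e, hXXv v, sub_self]
      refine ⟨X φ + Y ψ, ?_, ?_⟩
      · rw [map_add, hXY0, add_zero, hXXv φ, hSxX]
      · rw [map_add, hYX0, zero_add, hYYv ψ, hSyY]
end

section
/- Let W h = (X^{1/2}h, Y^{1/2}h) be the closed isometry from K into K₁ × K₂, where K₁ = closure(ran X), K₂ = closure(ran Y) carry the inner product of K, and X, Y are nonnegative contractions with X + Y = I. Then W* (f, g) = X^{1/2}f + Y^{1/2}g is a partial isometry, ‖X^{1/2}f + Y^{1/2}g‖²_K ≤ ‖f‖²_K + ‖g‖²_K for f ∈ K₁, g ∈ K₂, with equality if and only if f = X^{1/2}h and g = Y^{1/2}h for some h ∈ K, and the orthogonal complement of ran W equals { (−Y^{1/2}k, X^{1/2}k) : k ∈ closure(ran XY) }. -/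
lemma sa_inner {K : Type*} [NormedAddCommGroup K] [InnerProductSpace ℝ K] [CompleteSpace K]
    {A : K →L[ℝ] K} (hA : IsSelfAdjoint A) (x y : K) :
    (inner ℝ (A x) y : ℝ) = inner ℝ x (A y) := by
  conv_lhs => rw [← hA.adjoint_eq]
  exact ContinuousLinearMap.adjoint_inner_left A y x

lemma pos_inner_zero {K : Type*} [NormedAddCommGroup K] [InnerProductSpace ℝ K] [CompleteSpace K]
    {A : K →L[ℝ] K} (hA : IsSelfAdjoint A)
    (h0 : ∀ x, 0 ≤ (inner ℝ (A x) x : ℝ)) {w : K} (hw : (inner ℝ (A w) w : ℝ) = 0) : A w = 0 := by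
  have key : ∀ u : K, (inner ℝ (A w) u : ℝ) = 0 := by
    intro u
    by_contra hb
    set b : ℝ := inner ℝ (A w) u with hbdef
    set c : ℝ := inner ℝ (A u) u with hcdef
    have hc : 0 ≤ c := h0 u
    set t : ℝ := -b / (c + 1) with htdef
    have h := h0 (w + t • u)
    have hexp : (inner ℝ (A (w + t • u)) (w + t • u) : ℝ) = 2 * t * b + t ^ 2 * c := by
      have hswap : (inner ℝ (A u) w : ℝ) = b := by
        rw [sa_inner hA u w, real_inner_comm]
      simp only [map_add, map_smul, inner_add_left, inner_add_right,
        real_inner_smul_left, real_inner_smul_right, hw]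
      rw [hswap, ← hbdef, ← hcdef]
      ring_nf
    rw [hexp] at h
    have hb2 : 0 < b ^ 2 := by positivity
    have hc1 : 0 < c + 1 := by linarith
    rw [htdef] at h
    rw [div_pow, neg_pow] at h
    have h2 : 0 ≤ (2 * (-b / (c + 1)) * b + (-b) ^ 2 / (c + 1) ^ 2 * c) * (c + 1)^2 := by
      apply mul_nonneg
      · convert h using 2; rfl; ring
      · positivity
    have hexpand : (2 * (-b / (c + 1)) * b + (-b) ^ 2 / (c + 1) ^ 2 * c) * (c + 1)^2
        = -b^2 * (c + 2) := by
      field_simp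
      ring
    rw [hexpand] at h2
    nlinarith
  have := key (A w)
  exact inner_self_eq_zero.mp this

lemma pos_mul_pos {K : Type*} [NormedAddCommGroup K] [InnerProductSpace ℝ K] [CompleteSpace K]
    {P Q : K →L[ℝ] K} (hP : IsSelfAdjoint P) (hQ : IsSelfAdjoint Q)
    (hP0 : ∀ x, 0 ≤ (inner ℝ (P x) x : ℝ)) (hP1 : ∀ x, (inner ℝ (P x) x : ℝ) ≤ ‖x‖ ^ 2)
    (hQ0 : ∀ x, 0 ≤ (inner ℝ (Q x) x : ℝ)) (hPQ : Commute P Q) (v : K) :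
    0 ≤ (inner ℝ (P (Q v)) v : ℝ) := by
  classical
  let f : ℕ → (K →L[ℝ] K) := fun n => Nat.rec P (fun _ F => F - F * F) n
  have hf0 : f 0 = P := rfl
  have hfs : ∀ n, f (n + 1) = f n - f n * f n := fun n => rfl
  have inv : ∀ n, IsSelfAdjoint (f n) ∧ (∀ x, 0 ≤ (inner ℝ (f n x) x : ℝ)) ∧
      (∀ x, (inner ℝ (f n x) x : ℝ) ≤ ‖x‖ ^ 2) ∧ Commute (f n) Q ∧
      P = (∑ k ∈ Finset.range n, f k * f k) + f n := by
    intro n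
    induction n with
    | zero => exact ⟨hP, hP0, hP1, hPQ, by simp [hf0]⟩
    | succ n ih =>
      obtain ⟨hsa, h0, h1, hcq, hsum⟩ := ih
      set F := f n with hF
      have hFFsa : IsSelfAdjoint (F * F) := by
        rw [IsSelfAdjoint, star_mul, hsa.star_eq]
      have hsa' : IsSelfAdjoint (f (n + 1)) := by
        rw [hfs]; exact hsa.sub hFFsa
      have h1sa : IsSelfAdjoint (1 - F) := (IsSelfAdjoint.one (R := K →L[ℝ] K)).sub hsa
      have h1pos : ∀ x, 0 ≤ (inner ℝ ((1 - F) x) x : ℝ) := by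
        intro x
        have : ((1 - F) x) = x - F x := by
          simp [ContinuousLinearMap.sub_apply]
        rw [this, inner_sub_left]
        have := h1 x
        rw [real_inner_self_eq_norm_sq x] at *
        linarith
      have hid : F - F * F = F * (1 - F) * F + (1 - F) * F * (1 - F) := by
        noncomm_ring
      have h0' : ∀ x, 0 ≤ (inner ℝ (f (n + 1) x) x : ℝ) := by
        intro x
        rw [hfs, hid]
        have e1 : ((F * (1 - F) * F + (1 - F) * F * (1 - F)) x)
            = F ((1 - F) (F x)) + (1 - F) (F ((1 - F) x)) := by
          simp [ContinuousLinearMap.add_apply, ContinuousLinearMap.mul_apply]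
        rw [e1, inner_add_left]
        have t1 : (inner ℝ (F ((1 - F) (F x))) x : ℝ) = inner ℝ ((1 - F) (F x)) (F x) :=
          sa_inner hsa _ _
        have t2 : (inner ℝ ((1 - F) (F ((1 - F) x))) x : ℝ) = inner ℝ (F ((1 - F) x)) ((1 - F) x) :=
          sa_inner h1sa _ _
        rw [t1, t2]
        have := h1pos (F x)
        have := h0 ((1 - F) x)
        linarith
      have h1' : ∀ x, (inner ℝ (f (n + 1) x) x : ℝ) ≤ ‖x‖ ^ 2 := by
        intro x
        rw [hfs]
        have e1 : ((F - F * F) x) = F x - F (F x) := by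
          simp [ContinuousLinearMap.sub_apply, ContinuousLinearMap.mul_apply]
        rw [e1, inner_sub_left]
        have t1 : (inner ℝ (F (F x)) x : ℝ) = inner ℝ (F x) (F x) := sa_inner hsa _ _
        rw [t1, real_inner_self_eq_norm_sq]
        have := h1 x
        nlinarith [sq_nonneg ‖F x‖]
      have hcq' : Commute (f (n + 1)) Q := by
        rw [hfs]; exact (hcq).sub_left (hcq.mul_left hcq)
      have hsum' : P = (∑ k ∈ Finset.range (n + 1), f k * f k) + f (n + 1) := by
        rw [Finset.sum_range_succ, hfs, ← hF]
        rw [hsum]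
        abel
      exact ⟨hsa', h0', h1', hcq', hsum'⟩
  -- pointwise consequences
  have happ : ∀ n, (inner ℝ (P (Q v)) v : ℝ)
      = (∑ k ∈ Finset.range n, (inner ℝ (Q (f k v)) (f k v) : ℝ)) + inner ℝ ((f n) (Q v)) v := by
    intro n
    obtain ⟨hsa, h0, h1, hcq, hsum⟩ := inv n
    have := congrArg (fun T : K →L[ℝ] K => (inner ℝ (T (Q v)) v : ℝ)) hsum
    simp only [ContinuousLinearMap.add_apply, ContinuousLinearMap.coe_sum', Finset.sum_apply,
      inner_add_left, sum_inner] at this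
    rw [this]
    congr 1
    apply Finset.sum_congr rfl
    intro k hk
    obtain ⟨hsak, _, _, hcqk, _⟩ := inv k
    have hcomm : f k (Q v) = Q (f k v) := by
      have := congrArg (fun T : K →L[ℝ] K => T v) hcqk.eq
      simpa [ContinuousLinearMap.mul_apply] using this
    have : ((f k * f k) (Q v)) = f k (f k (Q v)) := rfl
    rw [this, sa_inner hsak, hcomm, real_inner_comm]
  have hquad : ∀ n, (inner ℝ (P v) v : ℝ)
      = (∑ k ∈ Finset.range n, ‖f k v‖ ^ 2) + inner ℝ ((f n) v) v := by
    intro n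
    obtain ⟨hsa, h0, h1, hcq, hsum⟩ := inv n
    have := congrArg (fun T : K →L[ℝ] K => (inner ℝ (T v) v : ℝ)) hsum
    simp only [ContinuousLinearMap.add_apply, ContinuousLinearMap.coe_sum', Finset.sum_apply,
      inner_add_left, sum_inner] at this
    rw [this]
    congr 1
    apply Finset.sum_congr rfl
    intro k hk
    obtain ⟨hsak, _, _, _, _⟩ := inv k
    have : ((f k * f k) v) = f k (f k v) := rfl
    rw [this, sa_inner hsak, real_inner_self_eq_norm_sq]
  -- small terms exist
  have hsmall : ∀ ε > 0, ∃ n, ‖f n v‖ ^ 2 < ε := by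
    intro ε hε
    by_contra hcon
    push_neg at hcon
    obtain ⟨n, hn⟩ := exists_nat_gt ((inner ℝ (P v) v : ℝ) / ε)
    have h1 : (n : ℝ) * ε ≤ ∑ k ∈ Finset.range n, ‖f k v‖ ^ 2 := by
      calc (n : ℝ) * ε = ∑ _k ∈ Finset.range n, ε := by
            rw [Finset.sum_const, Finset.card_range, nsmul_eq_mul]
        _ ≤ _ := Finset.sum_le_sum fun k _ => hcon k
    obtain ⟨_, h0n, _, _, _⟩ := inv n
    have h2 := hquad n
    have h3 : (n : ℝ) * ε ≤ (inner ℝ (P v) v : ℝ) := by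
      have := h0n v
      linarith
    rw [div_lt_iff₀ hε] at hn
    linarith [hn]
  -- conclude
  by_contra hneg
  push_neg at hneg
  set c : ℝ := inner ℝ (P (Q v)) v with hc
  have hQv : ‖Q v‖ ≠ 0 := by
    intro h
    have : Q v = 0 := norm_eq_zero.mp h
    rw [hc, this] at hneg
    simp at hneg
  have hQvpos : 0 < ‖Q v‖ := lt_of_le_of_ne (norm_nonneg _) (Ne.symm hQv)
  have hcneg : c < 0 := hneg
  set d : ℝ := -c / ‖Q v‖ with hd
  have hdpos : 0 < d := div_pos (by linarith) hQvpos
  obtain ⟨n, hn⟩ := hsmall (d ^ 2) (by positivity)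
  obtain ⟨hsan, h0n, _, _, _⟩ := inv n
  have hsumpos : 0 ≤ ∑ k ∈ Finset.range n, (inner ℝ (Q (f k v)) (f k v) : ℝ) :=
    Finset.sum_nonneg fun k _ => hQ0 _
  have habs : |(inner ℝ ((f n) (Q v)) v : ℝ)| ≤ ‖Q v‖ * ‖f n v‖ := by
    rw [sa_inner hsan]
    exact abs_real_inner_le_norm _ _
  have hfn : ‖f n v‖ < d := by
    nlinarith [norm_nonneg (f n v)]
  have hr : ‖Q v‖ * ‖f n v‖ < -c := by
    have hqd : ‖Q v‖ * d = -c := by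
      rw [hd]; field_simp
    nlinarith
  have hrlow : c < (inner ℝ ((f n) (Q v)) v : ℝ) := by
    have := neg_abs_le (inner ℝ ((f n) (Q v)) v : ℝ)
    linarith
  have := happ n
  linarith [hsumpos, hrlow, this]

section
variable {K : Type*} [NormedAddCommGroup K] [InnerProductSpace ℝ K] [CompleteSpace K]

lemma sq_mul_eq_zero {A C : K →L[ℝ] K} (hA : IsSelfAdjoint A)
    (hA0 : ∀ x, 0 ≤ (inner ℝ (A x) x : ℝ)) (hA1 : ∀ x, (inner ℝ (A x) x : ℝ) ≤ ‖x‖ ^ 2)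
    (hCs : star C = -C) (hanti : C * A = -(A * C)) : A * A * C = 0 := by
  set T := A * C with hT
  have hTsa : IsSelfAdjoint T := by
    rw [IsSelfAdjoint, hT, star_mul, hCs, hA.star_eq, neg_mul, hanti, neg_neg]
  have hTA : T * A = -(A * T) := by
    rw [hT, mul_assoc, hanti, mul_neg, hT]
  have hAT : A * T = -(T * A) := by rw [hTA, neg_neg]
  have hkey1 : A * (T * T) = -(T * (A * T)) := by
    calc A * (T * T) = (A * T) * T := (mul_assoc _ _ _).symm
      _ = (-(T * A)) * T := by rw [hAT]
      _ = -(T * (A * T)) := by rw [neg_mul, mul_assoc]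
  have hATT : Commute A (T * T) := by
    show A * (T * T) = (T * T) * A
    calc A * (T * T) = -(T * (A * T)) := hkey1
      _ = -(T * (-(T * A))) := by rw [hAT]
      _ = T * (T * A) := by rw [mul_neg, neg_neg]
      _ = (T * T) * A := (mul_assoc _ _ _).symm
  have hQsa : IsSelfAdjoint (T * T) := by
    rw [IsSelfAdjoint, star_mul, hTsa.star_eq]
  have hQ0 : ∀ x, 0 ≤ (inner ℝ ((T * T) x) x : ℝ) := by
    intro x
    have : ((T * T) x) = T (T x) := rfl
    rw [this, sa_inner hTsa]
    exact real_inner_self_nonneg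
  have key : ∀ v : K, A (T v) = 0 := by
    intro v
    have hpos := pos_mul_pos hA hQsa hA0 hA1 hQ0 hATT v
    have heq : (inner ℝ (A ((T * T) v)) v : ℝ) = -(inner ℝ (A (T v)) (T v) : ℝ) := by
      have e1 : A ((T * T) v) = (A * (T * T)) v := rfl
      rw [e1, hkey1]
      have e2 : ((-(T * (A * T))) v) = -(T (A (T v))) := rfl
      rw [e2, inner_neg_left, sa_inner hTsa]
    have h1 : (inner ℝ (A (T v)) (T v) : ℝ) ≤ 0 := by rw [heq] at hpos; linarith
    have h2 : (0:ℝ) ≤ inner ℝ (A (T v)) (T v) := hA0 (T v)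
    exact pos_inner_zero hA hA0 (le_antisymm h1 h2)
  ext v
  have : (A * A * C) v = A (T v) := by
    rw [hT, mul_assoc]
    rfl
  rw [this, key v]
  rfl

lemma commute_sqrts {Sx Sy : K →L[ℝ] K} (hSxsa : IsSelfAdjoint Sx) (hSysa : IsSelfAdjoint Sy)
    (hSx0 : ∀ x, 0 ≤ (inner ℝ (Sx x) x : ℝ)) (hSy0 : ∀ x, 0 ≤ (inner ℝ (Sy x) x : ℝ))
    (hSx1 : ∀ x, (inner ℝ (Sx x) x : ℝ) ≤ ‖x‖ ^ 2) (hSy1 : ∀ x, (inner ℝ (Sy x) x : ℝ) ≤ ‖x‖ ^ 2)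
    (hsum : Sx * Sx + Sy * Sy = 1) : Sx * Sy = Sy * Sx := by
  set C := Sx * Sy - Sy * Sx with hC
  have hCs : star C = -C := by
    rw [hC, star_sub, star_mul, star_mul, hSxsa.star_eq, hSysa.star_eq, neg_sub]
  have hx2 : Sx * Sx = 1 - Sy * Sy := by rw [← hsum]; abel
  have hy2 : Sy * Sy = 1 - Sx * Sx := by rw [← hsum]; abel
  have hcomx : Sy * (Sx * Sx) = (Sx * Sx) * Sy := by
    rw [hx2]; noncomm_ring
  have hcomy : Sx * (Sy * Sy) = (Sy * Sy) * Sx := by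
    rw [hy2]; noncomm_ring
  have hanti1 : C * Sx = -(Sx * C) := by
    have h1 : C * Sx + Sx * C = Sx * Sx * Sy - Sy * (Sx * Sx) := by
      rw [hC]; noncomm_ring
    rw [hcomx, sub_self] at h1
    rw [eq_neg_iff_add_eq_zero]
    exact h1
  have hanti2 : C * Sy = -(Sy * C) := by
    have h1 : C * Sy + Sy * C = Sy * (Sy * Sx) - Sy * Sy * Sx + (Sx * (Sy * Sy) - Sy * Sy * Sx) := by
      rw [hC]; noncomm_ring
    rw [hcomy] at h1
    rw [eq_neg_iff_add_eq_zero]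
    rw [h1]
    noncomm_ring
  have z1 : Sx * Sx * C = 0 := sq_mul_eq_zero hSxsa hSx0 hSx1 hCs hanti1
  have z2 : Sy * Sy * C = 0 := sq_mul_eq_zero hSysa hSy0 hSy1 hCs hanti2
  have : C = 0 := by
    have : (Sx * Sx + Sy * Sy) * C = 0 := by rw [add_mul, z1, z2, add_zero]
    rwa [hsum, one_mul] at this
  rw [hC] at this
  exact sub_eq_zero.mp this
end


/-- for the closed isometry W h = (X^{1/2}h, Y^{1/2}h) from K into
K₁ × K₂, where K₁ = closure(ran X), K₂ = closure(ran Y) carry the inner product of K: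
the adjoint is W*(f,g) = X^{1/2}f + Y^{1/2}g (expressed via the adjoint identity);
W* is a partial isometry (it is isometric on ran W: W*(Wh) = h);
‖X^{1/2}f + Y^{1/2}g‖² ≤ ‖f‖² + ‖g‖² for f ∈ K₁, g ∈ K₂, with equality iff
f = X^{1/2}h and g = Y^{1/2}h for some h ∈ K; and the orthogonal complement of ran W
equals { (−Y^{1/2}k, X^{1/2}k) : k ∈ closure(ran XY) }. -/
theorem stmt_11 {K : Type*} [NormedAddCommGroup K] [InnerProductSpace ℝ K] [CompleteSpace K]
    (X Y Sx Sy : K →L[ℝ] K)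
    (hXsa : IsSelfAdjoint X) (hYsa : IsSelfAdjoint Y)
    (hX0 : ∀ x, 0 ≤ (inner ℝ (X x) x : ℝ)) (hX1 : ∀ x, (inner ℝ (X x) x : ℝ) ≤ ‖x‖ ^ 2)
    (hY0 : ∀ x, 0 ≤ (inner ℝ (Y x) x : ℝ)) (hY1 : ∀ x, (inner ℝ (Y x) x : ℝ) ≤ ‖x‖ ^ 2)
    (hXY : X + Y = 1)
    (hSxsa : IsSelfAdjoint Sx) (hSx0 : ∀ x, 0 ≤ (inner ℝ (Sx x) x : ℝ)) (hSx : Sx.comp Sx = X)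
    (hSysa : IsSelfAdjoint Sy) (hSy0 : ∀ x, 0 ≤ (inner ℝ (Sy x) x : ℝ)) (hSy : Sy.comp Sy = Y) :
    (∀ f ∈ (LinearMap.range (X : K →ₗ[ℝ] K)).topologicalClosure,
      ∀ g ∈ (LinearMap.range (Y : K →ₗ[ℝ] K)).topologicalClosure,
      (∀ h : K, (inner ℝ (Sx f + Sy g) h : ℝ) = inner ℝ f (Sx h) + inner ℝ g (Sy h)) ∧
      ‖Sx f + Sy g‖ ^ 2 ≤ ‖f‖ ^ 2 + ‖g‖ ^ 2 ∧
      (‖Sx f + Sy g‖ ^ 2 = ‖f‖ ^ 2 + ‖g‖ ^ 2 ↔ ∃ h : K, f = Sx h ∧ g = Sy h) ∧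
      ((∀ h : K, (inner ℝ f (Sx h) : ℝ) + inner ℝ g (Sy h) = 0) ↔
        ∃ k ∈ (LinearMap.range ((X.comp Y : K →L[ℝ] K) : K →ₗ[ℝ] K)).topologicalClosure,
          f = -(Sy k) ∧ g = Sx k)) ∧
    (∀ h : K, Sx (Sx h) + Sy (Sy h) = h) := by
  -- pointwise basic facts
  have hXapp : ∀ h : K, Sx (Sx h) = X h := by
    intro h; rw [← hSx]; rfl
  have hYapp : ∀ h : K, Sy (Sy h) = Y h := by
    intro h; rw [← hSy]; rfl
  have hXYapp : ∀ h : K, X h + Y h = h := by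
    intro h
    have := congrArg (fun T : K →L[ℝ] K => T h) hXY
    simpa using this
  have hId : ∀ h : K, Sx (Sx h) + Sy (Sy h) = h := by
    intro h; rw [hXapp, hYapp]; exact hXYapp h
  have hnormx : ∀ h : K, ‖Sx h‖ ^ 2 = (inner ℝ (X h) h : ℝ) := by
    intro h
    rw [← hXapp, sa_inner hSxsa, real_inner_self_eq_norm_sq]
  have hnormy : ∀ h : K, ‖Sy h‖ ^ 2 = (inner ℝ (Y h) h : ℝ) := by
    intro h
    rw [← hYapp, sa_inner hSysa, real_inner_self_eq_norm_sq]
  have hsplit : ∀ u : K, ‖Sx u‖ ^ 2 + ‖Sy u‖ ^ 2 = ‖u‖ ^ 2 := by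
    intro u
    rw [hnormx, hnormy, ← inner_add_left]
    have : X u + Y u = u := hXYapp u
    rw [this, real_inner_self_eq_norm_sq]
  have hSxnorm : ∀ x : K, ‖Sx x‖ ≤ ‖x‖ := by
    intro x
    have h1 : ‖Sx x‖ ^ 2 ≤ ‖x‖ ^ 2 := by rw [hnormx]; exact hX1 x
    nlinarith [norm_nonneg (Sx x), norm_nonneg x]
  have hSynorm : ∀ x : K, ‖Sy x‖ ≤ ‖x‖ := by
    intro x
    have h1 : ‖Sy x‖ ^ 2 ≤ ‖x‖ ^ 2 := by rw [hnormy]; exact hY1 x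
    nlinarith [norm_nonneg (Sy x), norm_nonneg x]
  have hSx1 : ∀ x : K, (inner ℝ (Sx x) x : ℝ) ≤ ‖x‖ ^ 2 := by
    intro x
    calc (inner ℝ (Sx x) x : ℝ) ≤ ‖Sx x‖ * ‖x‖ := real_inner_le_norm _ _
      _ ≤ ‖x‖ * ‖x‖ := mul_le_mul_of_nonneg_right (hSxnorm x) (norm_nonneg x)
      _ = ‖x‖ ^ 2 := (sq ‖x‖).symm
  have hSy1 : ∀ x : K, (inner ℝ (Sy x) x : ℝ) ≤ ‖x‖ ^ 2 := by
    intro x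
    calc (inner ℝ (Sy x) x : ℝ) ≤ ‖Sy x‖ * ‖x‖ := real_inner_le_norm _ _
      _ ≤ ‖x‖ * ‖x‖ := mul_le_mul_of_nonneg_right (hSynorm x) (norm_nonneg x)
      _ = ‖x‖ ^ 2 := (sq ‖x‖).symm
  have hcommop : Sx * Sy = Sy * Sx := by
    apply commute_sqrts hSxsa hSysa hSx0 hSy0 hSx1 hSy1
    have e1 : Sx * Sx = X := hSx
    have e2 : Sy * Sy = Y := hSy
    rw [e1, e2, hXY]
  have hcom : ∀ v : K, Sx (Sy v) = Sy (Sx v) := by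
    intro v
    have := congrArg (fun T : K →L[ℝ] K => T v) hcommop
    simpa [ContinuousLinearMap.mul_apply] using this
  -- adjoint identity (no membership needed)
  have hadj : ∀ f g h : K, (inner ℝ (Sx f + Sy g) h : ℝ) = inner ℝ f (Sx h) + inner ℝ g (Sy h) := by
    intro f g h
    rw [inner_add_left, sa_inner hSxsa, sa_inner hSysa]
  -- the inequality
  have hineq : ∀ f g : K, ‖Sx f + Sy g‖ ^ 2 ≤ ‖f‖ ^ 2 + ‖g‖ ^ 2 := by
    intro f g
    set u : K := Sx f + Sy g with hu
    have h1 : ‖u‖ ^ 2 = (inner ℝ f (Sx u) : ℝ) + inner ℝ g (Sy u) := by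
      rw [← hadj f g u, hu, real_inner_self_eq_norm_sq]
    have h2 : (inner ℝ f (Sx u) : ℝ) ≤ ‖f‖ * ‖Sx u‖ := real_inner_le_norm _ _
    have h3 : (inner ℝ g (Sy u) : ℝ) ≤ ‖g‖ * ‖Sy u‖ := real_inner_le_norm _ _
    have h4 := hsplit u
    rcases eq_or_lt_of_le (norm_nonneg u) with h5 | h5
    · rw [← h5]
      norm_num
      positivity
    · nlinarith [sq_nonneg (‖f‖ * ‖Sy u‖ - ‖g‖ * ‖Sx u‖), sq_nonneg ‖u‖, norm_nonneg (Sx u),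
        norm_nonneg (Sy u), norm_nonneg f, norm_nonneg g]
  refine ⟨?_, hId⟩
  intro f hf g hg
  refine ⟨hadj f g, hineq f g, ?_, ?_⟩
  · -- equality iff
    constructor
    · intro heq
      set u : K := Sx f + Sy g with hu
      have h1 : ‖u‖ ^ 2 = (inner ℝ f (Sx u) : ℝ) + inner ℝ g (Sy u) := by
        rw [← hadj f g u, hu, real_inner_self_eq_norm_sq]
      have h4 := hsplit u
      have hzf : ‖f - Sx u‖ ^ 2 = ‖f‖ ^ 2 - 2 * inner ℝ f (Sx u) + ‖Sx u‖ ^ 2 :=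
        norm_sub_sq_real f (Sx u)
      have hzg : ‖g - Sy u‖ ^ 2 = ‖g‖ ^ 2 - 2 * inner ℝ g (Sy u) + ‖Sy u‖ ^ 2 :=
        norm_sub_sq_real g (Sy u)
      have hsum0 : ‖f - Sx u‖ ^ 2 + ‖g - Sy u‖ ^ 2 = 0 := by
        rw [hzf, hzg]
        have : ‖u‖ ^ 2 = ‖f‖ ^ 2 + ‖g‖ ^ 2 := heq
        linarith
      have hf0 : f - Sx u = 0 := by
        have h6 : ‖f - Sx u‖ ^ 2 = 0 := by
          nlinarith [sq_nonneg ‖f - Sx u‖, sq_nonneg ‖g - Sy u‖]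
        have := pow_eq_zero_iff (n := 2) (by norm_num) |>.mp h6
        exact norm_eq_zero.mp this
      have hg0 : g - Sy u = 0 := by
        have h6 : ‖g - Sy u‖ ^ 2 = 0 := by
          nlinarith [sq_nonneg ‖f - Sx u‖, sq_nonneg ‖g - Sy u‖]
        have := pow_eq_zero_iff (n := 2) (by norm_num) |>.mp h6
        exact norm_eq_zero.mp this
      exact ⟨u, (sub_eq_zero.mp hf0), (sub_eq_zero.mp hg0)⟩
    · rintro ⟨h, rfl, rfl⟩
      rw [hId h, hsplit h]
  · -- orthogonal complement characterization
    constructor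
    · intro hperp
      have hu0 : Sx f + Sy g = 0 := by
        have h1 : ∀ h : K, (inner ℝ (Sx f + Sy g) h : ℝ) = 0 := by
          intro h; rw [hadj f g h]; exact hperp h
        have := h1 (Sx f + Sy g)
        exact inner_self_eq_zero.mp this
      have hxf : Sx f = -(Sy g) := by
        rw [eq_neg_iff_add_eq_zero]; exact hu0
      have hyg : Sy g = -(Sx f) := by
        rw [eq_neg_iff_add_eq_zero, add_comm]; exact hu0
      refine ⟨Sx g - Sy f, ?_, ?_, ?_⟩
      · -- membership in closure of range (X ∘ Y)
        rw [← Submodule.orthogonal_orthogonal_eq_closure]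
        rw [Submodule.mem_orthogonal]
        intro w hw
        rw [Submodule.mem_orthogonal] at hw
        have hw' : ∀ v : K, (inner ℝ (X (Y v)) w : ℝ) = 0 := by
          intro v; exact hw _ ⟨v, rfl⟩
        have hYXw : Y (X w) = 0 := by
          have h1 : ∀ v : K, (inner ℝ v (Y (X w)) : ℝ) = 0 := by
            intro v
            have := hw' v
            rwa [sa_inner hXsa, sa_inner hYsa] at this
          have := h1 (Y (X w))
          rw [real_inner_comm] at this
          exact inner_self_eq_zero.mp this
        have s1 : Sy (X w) = 0 := by
          have h1 : (inner ℝ (Sy (X w)) (Sy (X w)) : ℝ) = 0 := by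
            rw [sa_inner hSysa, hYapp, hYXw]
            simp
          exact inner_self_eq_zero.mp h1
        have e1 : Sx (Sx (Sy w)) = 0 := by
          calc Sx (Sx (Sy w)) = Sx (Sy (Sx w)) := by rw [hcom w]
            _ = Sy (Sx (Sx w)) := hcom (Sx w)
            _ = Sy (X w) := by rw [hXapp]
            _ = 0 := s1
        have s2 : Sx (Sy w) = 0 := by
          have h1 : (inner ℝ (Sx (Sy w)) (Sx (Sy w)) : ℝ) = 0 := by
            rw [sa_inner hSxsa, e1]
            simp
          exact inner_self_eq_zero.mp h1
        have hYSxw : Y (Sx w) = 0 := by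
          calc Y (Sx w) = Sy (Sy (Sx w)) := (hYapp (Sx w)).symm
            _ = Sy (Sx (Sy w)) := by rw [hcom w]
            _ = Sy 0 := by rw [s2]
            _ = 0 := map_zero _
        have hXSyw : X (Sy w) = 0 := by
          calc X (Sy w) = Sx (Sx (Sy w)) := (hXapp (Sy w)).symm
            _ = 0 := e1
        rw [← Submodule.orthogonal_orthogonal_eq_closure] at hg hf
        have hg' := (Submodule.mem_orthogonal _ _).mp hg
        have hf' := (Submodule.mem_orthogonal _ _).mp hf
        have hg0 : (inner ℝ (Sx w) g : ℝ) = 0 := by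
          apply hg'
          rw [Submodule.mem_orthogonal]
          rintro u hu
          obtain ⟨v, rfl⟩ := hu
          show (inner ℝ (Y v) (Sx w) : ℝ) = 0
          rw [sa_inner hYsa, hYSxw]
          simp
        have hf0 : (inner ℝ (Sy w) f : ℝ) = 0 := by
          apply hf'
          rw [Submodule.mem_orthogonal]
          rintro u hu
          obtain ⟨v, rfl⟩ := hu
          show (inner ℝ (X v) (Sy w) : ℝ) = 0
          rw [sa_inner hXsa, hXSyw]
          simp
        rw [inner_sub_right, ← sa_inner hSxsa, ← sa_inner hSysa, hg0, hf0]
        ring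
      · -- f = -(Sy k)
        have hcalc : Sy (Sx g - Sy f) = -f := by
          calc Sy (Sx g - Sy f) = Sy (Sx g) - Sy (Sy f) := map_sub _ _ _
            _ = Sx (Sy g) - Y f := by rw [← hcom g, hYapp]
            _ = Sx (-(Sx f)) - Y f := by rw [hyg]
            _ = -(Sx (Sx f)) - Y f := by rw [map_neg]
            _ = -(X f) - Y f := by rw [hXapp]
            _ = -(X f + Y f) := by abel
            _ = -f := by rw [hXYapp f]
        rw [hcalc, neg_neg]
      · -- g = Sx k
        have hcalc : Sx (Sx g - Sy f) = g := by
          calc Sx (Sx g - Sy f) = Sx (Sx g) - Sx (Sy f) := map_sub _ _ _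
            _ = X g - Sy (Sx f) := by rw [hXapp, hcom f]
            _ = X g - Sy (-(Sy g)) := by rw [hxf]
            _ = X g - (-(Sy (Sy g))) := by rw [map_neg]
            _ = X g + Sy (Sy g) := by rw [sub_neg_eq_add]
            _ = X g + Y g := by rw [hYapp]
            _ = g := hXYapp g
        rw [hcalc]
    · rintro ⟨k, hk, rfl, rfl⟩
      intro h
      rw [inner_neg_left, sa_inner hSysa, sa_inner hSxsa, hcom h]
      ring
end
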